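/- arXiv:1602.01341 — 3 statements merged into one kernel-verified Lean document; each statement's English description precedes it below -/
import Mathlib

section
/- Let b ≥ 1 be an integer and s ≥ s₀ > b/2. There exist constants C(s) ≥ C(s₀) ≥ 1 such that for all matrices A, B on ℤᵇ with |A|_s < ∞ and |B|_s < ∞, the product AB, defined by (AB)_k^{k'} := Σ_{j∈ℤᵇ} A_k^j B_j^{k'}, is well defined (the sums converge absolutely) and satisfies the interpolation estimate |AB|_s ≤ C(s)|A|_{s₀}|B|_s + C(s₀)|A|_s|B|_{s₀}; in particular |AB|_s ≤ C(s)|A|_s|B|_s. -/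
open scoped ENNReal NNReal
open MeasureTheory

/-- `|i| := max_k |i_k|` for a multi-index `i ∈ ℤᵇ`. -/
def absIdx {b : ℕ} (i : Fin b → ℤ) : ℕ :=
  Finset.univ.sup fun k => (i k).natAbs

/-- `⟨i⟩ := max(1, |i|)`. -/
noncomputable def wt {b : ℕ} (i : Fin b → ℤ) : ℝ := max 1 (absIdx i : ℝ)

/-- Sobolev norm `‖u‖_s := (Σ_i ⟨i⟩^{2s} |u_i|²)^{1/2}` (valued in `ℝ≥0∞`). -/
noncomputable def sobNorm {b : ℕ} (u : (Fin b → ℤ) → ℂ) (s : ℝ) : ℝ≥0∞ :=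
  (∑' i : Fin b → ℤ, ENNReal.ofReal (wt i ^ (2 * s)) * (‖u i‖₊ : ℝ≥0∞) ^ 2) ^ (1/2 : ℝ)

/-- The `s`-decay norm of a bi-infinite matrix
`|A|_s := (Σ_h ⟨h⟩^{2s} (sup_{k-k'=h} |A_k^{k'}|)²)^{1/2}` (valued in `ℝ≥0∞`). -/
noncomputable def decayNorm {b : ℕ} (A : (Fin b → ℤ) → (Fin b → ℤ) → ℂ) (s : ℝ) : ℝ≥0∞ :=
  (∑' h : Fin b → ℤ, ENNReal.ofReal (wt h ^ (2 * s)) *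
      (⨆ k : Fin b → ℤ, (‖A k (k - h)‖₊ : ℝ≥0∞)) ^ 2) ^ (1/2 : ℝ)

namespace Stmt4Aux

/-- Cauchy-Schwarz for ℝ≥0∞-valued tsums. -/
lemma tsum_CS {ι : Type*} [Countable ι] [MeasurableSpace ι] [MeasurableSingletonClass ι]
    (f g : ι → ℝ≥0∞) :
    ∑' i, f i * g i ≤ (∑' i, f i ^ 2) ^ (1/2 : ℝ) * (∑' i, g i ^ 2) ^ (1/2 : ℝ) := by
  have h2 : Real.HolderConjugate 2 2 := Real.HolderConjugate.two_two
  have := ENNReal.lintegral_mul_le_Lp_mul_Lq (Measure.count : Measure ι) h2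
    (measurable_of_countable f).aemeasurable (measurable_of_countable g).aemeasurable
  have hre : ∀ x : ℝ≥0∞, x ^ (2:ℝ) = x ^ 2 := fun x => by
    rw [show (2:ℝ) = ((2:ℕ):ℝ) by norm_num, ENNReal.rpow_natCast]
  simp only [lintegral_count, hre, Pi.mul_apply] at this
  simpa using this

/-- Minkowski for ℝ≥0∞-valued tsums. -/
lemma tsum_minkowski {ι : Type*} [Countable ι] [MeasurableSpace ι] [MeasurableSingletonClass ι]
    (f g : ι → ℝ≥0∞) :
    (∑' i, (f i + g i) ^ 2) ^ (1/2 : ℝ) ≤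
      (∑' i, f i ^ 2) ^ (1/2 : ℝ) + (∑' i, g i ^ 2) ^ (1/2 : ℝ) := by
  have := ENNReal.lintegral_Lp_add_le (μ := (Measure.count : Measure ι))
    (measurable_of_countable f).aemeasurable (measurable_of_countable g).aemeasurable
    (p := 2) one_le_two
  have hre : ∀ x : ℝ≥0∞, x ^ (2:ℝ) = x ^ 2 := fun x => by
    rw [show (2:ℝ) = ((2:ℕ):ℝ) by norm_num, ENNReal.rpow_natCast]
  simp only [lintegral_count, hre, Pi.add_apply] at this
  simpa using this


lemma tsum_sub_left {ι : Type*} [AddCommGroup ι] (c : ι) (f : ι → ℝ≥0∞) :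
    ∑' x, f (c - x) = ∑' x, f x := (Equiv.subLeft c).tsum_eq f

lemma tsum_sub_right {ι : Type*} [AddCommGroup ι] (c : ι) (f : ι → ℝ≥0∞) :
    ∑' x, f (x - c) = ∑' x, f x := (Equiv.subRight c).tsum_eq f

lemma sqrt_sq (x : ℝ≥0∞) : (x ^ 2) ^ (1/2 : ℝ) = x := by
  rw [← ENNReal.rpow_natCast x 2, ← ENNReal.rpow_mul]
  norm_num

lemma sq_sqrt (x : ℝ≥0∞) : (x ^ (1/2 : ℝ)) ^ 2 = x := by
  rw [← ENNReal.rpow_natCast (x ^ (1/2:ℝ)) 2, ← ENNReal.rpow_mul]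
  norm_num

/-- Young's inequality `‖F ⋆ G‖₂ ≤ ‖F‖₂ ‖G‖₁` (squared) for ℝ≥0∞-valued sums. -/
lemma tsum_young {ι : Type*} [AddCommGroup ι] [Countable ι] [MeasurableSpace ι]
    [MeasurableSingletonClass ι] (F G : ι → ℝ≥0∞) :
    ∑' h, (∑' m, F m * G (h - m)) ^ 2 ≤ (∑' m, F m ^ 2) * (∑' m, G m) ^ 2 := by
  have key : ∀ h : ι, (∑' m, F m * G (h - m)) ^ 2 ≤
      (∑' m, F m ^ 2 * G (h - m)) * (∑' m, G m) := by
    intro h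
    have hcs : ∑' m, F m * G (h - m) ≤
        (∑' m, F m ^ 2 * G (h - m)) ^ (1/2 : ℝ) * (∑' m, G (h - m)) ^ (1/2 : ℝ) := by
      have := tsum_CS (fun m => F m * G (h - m) ^ (1/2 : ℝ)) (fun m => G (h - m) ^ (1/2 : ℝ))
      calc ∑' m, F m * G (h - m)
          = ∑' m, (F m * G (h - m) ^ (1/2:ℝ)) * G (h - m) ^ (1/2:ℝ) := by
            exact tsum_congr fun m => by rw [mul_assoc, ← sq, sq_sqrt]
        _ ≤ (∑' m, (F m * G (h - m) ^ (1/2:ℝ)) ^ 2) ^ (1/2:ℝ) *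
              (∑' m, (G (h - m) ^ (1/2:ℝ)) ^ 2) ^ (1/2:ℝ) := this
        _ = (∑' m, F m ^ 2 * G (h - m)) ^ (1/2:ℝ) * (∑' m, G (h - m)) ^ (1/2:ℝ) := by
            rw [tsum_congr (fun m => by rw [mul_pow, sq_sqrt] :
                  ∀ m, (F m * G (h - m) ^ (1/2:ℝ)) ^ 2 = F m ^ 2 * G (h - m)),
                tsum_congr (fun m => sq_sqrt (G (h - m)))]
    calc (∑' m, F m * G (h - m)) ^ 2
        ≤ ((∑' m, F m ^ 2 * G (h - m)) ^ (1/2:ℝ) * (∑' m, G (h - m)) ^ (1/2:ℝ)) ^ 2 :=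
          pow_le_pow_left₀ zero_le hcs 2
      _ = (∑' m, F m ^ 2 * G (h - m)) * (∑' m, G (h - m)) := by
          rw [mul_pow, sq_sqrt, sq_sqrt]
      _ = (∑' m, F m ^ 2 * G (h - m)) * (∑' m, G m) := by rw [tsum_sub_left h G]
  calc ∑' h, (∑' m, F m * G (h - m)) ^ 2
      ≤ ∑' h, (∑' m, F m ^ 2 * G (h - m)) * (∑' m, G m) := ENNReal.tsum_le_tsum key
    _ = (∑' h, ∑' m, F m ^ 2 * G (h - m)) * (∑' m, G m) := ENNReal.tsum_mul_right
    _ = (∑' m, F m ^ 2) * (∑' m, G m) ^ 2 := by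
        rw [ENNReal.tsum_comm]
        have : ∀ m : ι, ∑' h, F m ^ 2 * G (h - m) = F m ^ 2 * ∑' h, G h := by
          intro m
          rw [ENNReal.tsum_mul_left, tsum_sub_right m G]
        rw [tsum_congr this, ENNReal.tsum_mul_right, sq]
        ring


variable {b : ℕ}

noncomputable def v (h : Fin b → ℤ) : ℝ≥0∞ := max 1 (absIdx h : ℝ≥0∞)

lemma one_le_v (h : Fin b → ℤ) : 1 ≤ v h := le_max_left _ _

lemma v_ne_zero (h : Fin b → ℤ) : v h ≠ 0 := by
  exact fun h0 => by simpa [h0] using one_le_v h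

lemma v_ne_top (h : Fin b → ℤ) : v h ≠ ⊤ := by
  simp [v, ENNReal.natCast_ne_top]

lemma ofReal_wt (h : Fin b → ℤ) : ENNReal.ofReal (wt h) = v h := by
  have hmono : Monotone ENNReal.ofReal := fun _ _ hab => ENNReal.ofReal_le_ofReal hab
  rw [wt, hmono.map_max, ENNReal.ofReal_one, ENNReal.ofReal_natCast]
  rfl

lemma one_le_wt (h : Fin b → ℤ) : 1 ≤ wt h := le_max_left _ _

lemma ofReal_wt_rpow (t : ℝ) (h : Fin b → ℤ) :
    ENNReal.ofReal (wt h ^ t) = v h ^ t := by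
  rw [← ENNReal.ofReal_rpow_of_pos (lt_of_lt_of_le one_pos (one_le_wt h)), ofReal_wt]

lemma rpow_two_mul (x : ℝ≥0∞) (t : ℝ) : x ^ (2 * t) = (x ^ t) ^ 2 := by
  rw [mul_comm, ENNReal.rpow_mul, ← ENNReal.rpow_natCast (x ^ t) 2]
  norm_num

/-- Rewriting the decay norm. -/
lemma decay_eq (A : (Fin b → ℤ) → (Fin b → ℤ) → ℂ) (t : ℝ) :
    decayNorm A t =
      (∑' h : Fin b → ℤ,
        (v h ^ t * ⨆ k : Fin b → ℤ, (‖A k (k - h)‖₊ : ℝ≥0∞)) ^ 2) ^ (1/2 : ℝ) := by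
  rw [decayNorm]
  congr 1
  refine tsum_congr fun h => ?_
  rw [ofReal_wt_rpow, rpow_two_mul, mul_pow]

/-- Subadditivity of the weight. -/
lemma v_sub_le (h m : Fin b → ℤ) : v h ≤ v m + v (h - m) := by
  have habs : (absIdx h : ℝ≥0∞) ≤ (absIdx m : ℝ≥0∞) + (absIdx (h - m) : ℝ≥0∞) := by
    have : absIdx h ≤ absIdx m + absIdx (h - m) := by
      simp only [absIdx]
      refine Finset.sup_le fun k _ => ?_
      calc (h k).natAbs = (m k + (h - m) k).natAbs := by simp
        _ ≤ (m k).natAbs + ((h - m) k).natAbs := Int.natAbs_add_le _ _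
        _ ≤ _ :=
          Nat.add_le_add (Finset.le_sup (f := fun k => (m k).natAbs) (Finset.mem_univ k))
            (Finset.le_sup (f := fun k => ((h - m) k).natAbs) (Finset.mem_univ k))
    exact_mod_cast Nat.cast_le.mpr this
  rw [v, v, v]
  refine max_le ?_ ?_
  · exact le_add_of_le_of_nonneg (le_max_left _ _) zero_le
  · exact le_trans habs (add_le_add (le_max_right _ _) (le_max_right _ _))

/-- Weight splitting: `⟨h⟩^s ≤ 2^s (⟨m⟩^s + ⟨h-m⟩^s)` for `s ≥ 0`. -/
lemma v_rpow_split {t : ℝ} (ht : 0 ≤ t) (h m : Fin b → ℤ) :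
    v h ^ t ≤ (2 : ℝ≥0∞) ^ t * (v m ^ t + v (h - m) ^ t) := by
  have h1 : v h ≤ 2 * max (v m) (v (h - m)) := by
    calc v h ≤ v m + v (h - m) := v_sub_le h m
      _ ≤ max (v m) (v (h-m)) + max (v m) (v (h-m)) :=
        add_le_add (le_max_left _ _) (le_max_right _ _)
      _ = 2 * max (v m) (v (h-m)) := (two_mul _).symm
  calc v h ^ t ≤ (2 * max (v m) (v (h - m))) ^ t := ENNReal.rpow_le_rpow h1 ht
    _ = 2 ^ t * max (v m) (v (h - m)) ^ t := ENNReal.mul_rpow_of_nonneg _ _ ht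
    _ ≤ 2 ^ t * (v m ^ t + v (h - m) ^ t) := by
      gcongr
      rcases max_cases (v m) (v (h - m)) with ⟨he, _⟩ | ⟨he, _⟩ <;> rw [he]
      · exact le_add_of_le_of_nonneg le_rfl zero_le
      · exact le_add_of_nonneg_of_le zero_le le_rfl


lemma v_rpow_ne_zero (h : Fin b → ℤ) (p : ℝ) : v h ^ p ≠ 0 := by
  simp [ENNReal.rpow_eq_zero_iff, v_ne_zero, v_ne_top]

lemma v_rpow_ne_top (h : Fin b → ℤ) (p : ℝ) : v h ^ p ≠ ⊤ := by
  simp [ENNReal.rpow_eq_top_iff, v_ne_zero, v_ne_top]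

/-- `ℓ¹` bound via Cauchy-Schwarz: `Σ d ≤ K^{1/2} (Σ ⟨m⟩^{2p} d²)^{1/2}`. -/
lemma l1_bound (p : ℝ) (d : (Fin b → ℤ) → ℝ≥0∞) :
    ∑' m, d m ≤ (∑' m : Fin b → ℤ, v m ^ (-(2 * p))) ^ (1/2 : ℝ) *
      (∑' m, (v m ^ p * d m) ^ 2) ^ (1/2 : ℝ) := by
  have hd : ∀ m : Fin b → ℤ, v m ^ (-p) * (v m ^ p * d m) = d m := by
    intro m
    rw [← mul_assoc, ENNReal.rpow_neg, ENNReal.inv_mul_cancel (v_rpow_ne_zero m p)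
      (v_rpow_ne_top m p), one_mul]
  have hsq : ∀ m : Fin b → ℤ, (v m ^ (-p)) ^ 2 = v m ^ (-(2 * p)) := by
    intro m
    rw [show -(2*p) = 2 * (-p) by ring, rpow_two_mul]
  calc ∑' m, d m = ∑' m, v m ^ (-p) * (v m ^ p * d m) := (tsum_congr hd).symm
    _ ≤ (∑' m, (v m ^ (-p)) ^ 2) ^ (1/2:ℝ) * (∑' m, (v m ^ p * d m) ^ 2) ^ (1/2:ℝ) :=
      tsum_CS _ _
    _ = (∑' m : Fin b → ℤ, v m ^ (-(2 * p))) ^ (1/2:ℝ) *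
        (∑' m, (v m ^ p * d m) ^ 2) ^ (1/2:ℝ) := by rw [tsum_congr hsq]

noncomputable def u (n : ℤ) : ℝ≥0∞ := max 1 (n.natAbs : ℝ≥0∞)

lemma piTsum (n : ℕ) (f : ℤ → ℝ≥0∞) :
    ∑' h : Fin n → ℤ, ∏ k, f (h k) = (∑' m : ℤ, f m) ^ n := by
  induction n with
  | zero =>
    rw [tsum_eq_single (fun i => i.elim0)
      (by intro c hc; exact absurd (funext fun i => i.elim0) hc)]
    simp
  | succ n ih =>
    rw [← (Fin.consEquiv fun _ : Fin (n+1) => ℤ).tsum_eq (fun h => ∏ k, f (h k))]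
    have : ∀ p : ℤ × (Fin n → ℤ),
        (∏ k, f ((Fin.consEquiv fun _ : Fin (n+1) => ℤ) p k)) = f p.1 * ∏ k, f (p.2 k) := by
      intro p
      rw [Fin.prod_univ_succ]
      simp [Fin.consEquiv]
    rw [tsum_congr this, ENNReal.tsum_prod']
    have : ∀ a : ℤ, ∑' h : Fin n → ℤ, f a * ∏ k, f (h k) = f a * (∑' m : ℤ, f m) ^ n := by
      intro a
      rw [ENNReal.tsum_mul_left, ih]
    rw [tsum_congr this, ENNReal.tsum_mul_right, pow_succ, mul_comm]

lemma oneD_ne_top {q : ℝ} (hq : 1 < q) : (∑' n : ℤ, u n ^ (-q)) ≠ ⊤ := by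
  have hq0 : 0 < q := lt_trans one_pos hq
  -- transfer to ℝ≥0
  have hcoe : ∀ n : ℤ, u n ^ (-q) = (((max 1 (n.natAbs : ℝ≥0)) ^ (-q) : ℝ≥0) : ℝ≥0∞) := by
    intro n
    rw [ENNReal.coe_rpow_of_ne_zero (by positivity : (max 1 (n.natAbs : ℝ≥0)) ≠ 0)]
    congr 1
  rw [tsum_congr hcoe, ENNReal.tsum_coe_ne_top_iff_summable]
  rw [← NNReal.summable_coe]
  have hval : ∀ n : ℤ, (((max 1 (n.natAbs : ℝ≥0)) ^ (-q) : ℝ≥0) : ℝ) =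
      (max 1 (n.natAbs : ℝ)) ^ (-q) := by
    intro n
    rw [NNReal.coe_rpow]
    congr 1
  rw [show (fun n : ℤ => (((max 1 (n.natAbs : ℝ≥0)) ^ (-q) : ℝ≥0) : ℝ)) =
      (fun n : ℤ => (max 1 (n.natAbs : ℝ)) ^ (-q)) from funext hval]
  -- summability over ℤ of the real function
  have hnat : Summable (fun n : ℕ => (max 1 (n : ℝ)) ^ (-q)) := by
    have h1 : Summable (fun n : ℕ => (((n : ℝ)) ^ q)⁻¹) := Real.summable_nat_rpow_inv.2 hq
    have h2 : Summable (fun n : ℕ => ((((n : ℝ) + 1)) ^ q)⁻¹) := by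
      have := (summable_nat_add_iff 1).2 h1
      simpa using this
    refine Summable.of_nonneg_of_le (fun n => Real.rpow_nonneg (by positivity) _)
      (fun n => ?_) (h2.mul_left ((2:ℝ) ^ q))
    have hmax : ((n : ℝ) + 1) / 2 ≤ max 1 (n : ℝ) := by
      rcases le_total ((n:ℝ)) 1 with hn | hn
      · calc ((n:ℝ)+1)/2 ≤ (1+1)/2 := by linarith
          _ ≤ max 1 (n:ℝ) := by simp
      · calc ((n:ℝ)+1)/2 ≤ ((n:ℝ)+(n:ℝ))/2 := by linarith
          _ = (n:ℝ) := by ring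
          _ ≤ max 1 (n:ℝ) := le_max_right _ _
    have hpos : (0:ℝ) < ((n : ℝ) + 1) / 2 := by positivity
    calc (max 1 (n:ℝ)) ^ (-q) = ((max 1 (n:ℝ)) ^ q)⁻¹ :=
          Real.rpow_neg (by positivity) q
      _ ≤ ((((n:ℝ)+1)/2) ^ q)⁻¹ := by
          gcongr

      _ = (2:ℝ) ^ q * (((n:ℝ)+1) ^ q)⁻¹ := by
          rw [Real.div_rpow (by positivity) (by norm_num), div_eq_mul_inv, mul_inv,
            inv_inv, mul_comm]
  apply Summable.of_nat_of_neg <;> simpa using hnat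

lemma u_le_v (h : Fin b → ℤ) (k : Fin b) : u (h k) ≤ v h := by
  rw [u, v]
  refine max_le (le_max_left _ _) (le_trans ?_ (le_max_right _ _))
  exact_mod_cast Nat.cast_le.mpr (Finset.le_sup (f := fun k => (h k).natAbs) (Finset.mem_univ k))

lemma K_lt_top (hb : 1 ≤ b) {p : ℝ} (hp : (b : ℝ) < p) :
    (∑' h : Fin b → ℤ, v h ^ (-p)) < ⊤ := by
  have hb0 : (0:ℝ) < b := by exact_mod_cast hb
  set q := p / b with hqdef
  have hq : 1 < q := (one_lt_div hb0).2 hp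
  have hq0 : 0 ≤ q := le_of_lt (lt_trans one_pos hq)
  have step : ∀ h : Fin b → ℤ, v h ^ (-p) ≤ ∏ k, u (h k) ^ (-q) := by
    intro h
    have hprod : ∏ k, u (h k) ≤ v h ^ b :=
      le_of_le_of_eq (Finset.prod_le_pow_card _ _ _ fun k _ => u_le_v h k)
        (by rw [Finset.card_univ, Fintype.card_fin])
    have h1 : v h ^ (-p) = ((v h ^ b) ^ q)⁻¹ := by
      rw [← ENNReal.rpow_natCast (v h) b, ← ENNReal.rpow_mul, ← ENNReal.rpow_neg]
      congr 1
      rw [hqdef]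
      field_simp
    have h2 : ∏ k, u (h k) ^ (-q) = ((∏ k, u (h k)) ^ q)⁻¹ := by
      rw [← ENNReal.rpow_neg, ENNReal.prod_rpow_of_ne_top (fun k _ => by simp [u])]
    rw [h1, h2]
    exact ENNReal.inv_le_inv' (ENNReal.rpow_le_rpow hprod hq0)
  calc (∑' h : Fin b → ℤ, v h ^ (-p)) ≤ ∑' h : Fin b → ℤ, ∏ k, u (h k) ^ (-q) :=
        ENNReal.tsum_le_tsum step
    _ = (∑' m : ℤ, u m ^ (-q)) ^ b := piTsum b fun m => u m ^ (-q)
    _ < ⊤ := ENNReal.pow_lt_top (lt_of_le_of_ne le_top (oneD_ne_top hq))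


lemma decay_mono (A : (Fin b → ℤ) → (Fin b → ℤ) → ℂ) {t₁ t₂ : ℝ} (h : t₁ ≤ t₂) :
    decayNorm A t₁ ≤ decayNorm A t₂ := by
  rw [decay_eq, decay_eq]
  refine ENNReal.rpow_le_rpow (ENNReal.tsum_le_tsum fun h' => ?_) (by norm_num)
  gcongr
  · exact one_le_v _

lemma ennnorm_tsum_le {ι : Type*} (f : ι → ℂ) :
    (‖∑' i, f i‖₊ : ℝ≥0∞) ≤ ∑' i, (‖f i‖₊ : ℝ≥0∞) := by
  by_cases h : ∑' i, (‖f i‖₊ : ℝ≥0∞) = ⊤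
  · exact h ▸ le_top
  · have hsm : Summable fun i => ‖f i‖₊ := ENNReal.tsum_coe_ne_top_iff_summable.1 h
    rw [← ENNReal.coe_tsum hsm]
    exact_mod_cast nnnorm_tsum_le hsm

/-- Core convolution estimate. -/
lemma core_est {s : ℝ} (hs0 : 0 ≤ s) (dA dB dP : (Fin b → ℤ) → ℝ≥0∞)
    (hdP : ∀ h, dP h ≤ ∑' m, dA m * dB (h - m)) :
    (∑' h, (v h ^ s * dP h) ^ 2) ^ (1/2:ℝ) ≤
      2 ^ s * ((∑' m, (v m ^ s * dA m) ^ 2) ^ (1/2:ℝ) * (∑' m, dB m)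
        + (∑' m, (v m ^ s * dB m) ^ 2) ^ (1/2:ℝ) * (∑' m, dA m)) := by
  set FA := fun m => v m ^ s * dA m with hFA
  set GB := fun m => v m ^ s * dB m with hGB
  set c1 := fun h => ∑' m, FA m * dB (h - m) with hc1
  set c2 := fun h => ∑' m, GB m * dA (h - m) with hc2
  have hweight : ∀ h, v h ^ s * dP h ≤ 2 ^ s * (c1 h + c2 h) := by
    intro h
    calc v h ^ s * dP h ≤ v h ^ s * ∑' m, dA m * dB (h - m) := mul_le_mul' le_rfl (hdP h)
      _ = ∑' m, v h ^ s * (dA m * dB (h - m)) := ENNReal.tsum_mul_left.symm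
      _ ≤ ∑' m, (2 ^ s * (v m ^ s + v (h - m) ^ s)) * (dA m * dB (h - m)) :=
          ENNReal.tsum_le_tsum fun m => mul_le_mul' (v_rpow_split hs0 h m) le_rfl
      _ = ∑' m, (2 ^ s * (FA m * dB (h - m)) +
            2 ^ s * (dA m * (v (h - m) ^ s * dB (h - m)))) := by
          refine tsum_congr fun m => ?_
          rw [hFA]
          ring
      _ = 2 ^ s * c1 h + 2 ^ s * (∑' m, dA m * (v (h - m) ^ s * dB (h - m))) := by
          rw [ENNReal.tsum_add, ENNReal.tsum_mul_left, ENNReal.tsum_mul_left]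
      _ = 2 ^ s * (c1 h + c2 h) := by
          rw [mul_add]
          congr 2
          rw [← tsum_sub_left h (fun m => dA m * (v (h - m) ^ s * dB (h - m))), hc2]
          refine tsum_congr fun m => ?_
          rw [sub_sub_cancel, hGB]
          ring
  calc (∑' h, (v h ^ s * dP h) ^ 2) ^ (1/2:ℝ)
      ≤ (∑' h, (2 ^ s * (c1 h + c2 h)) ^ 2) ^ (1/2:ℝ) :=
        ENNReal.rpow_le_rpow
          (ENNReal.tsum_le_tsum fun h => pow_le_pow_left₀ zero_le (hweight h) 2)
          (by norm_num)
    _ = 2 ^ s * (∑' h, (c1 h + c2 h) ^ 2) ^ (1/2:ℝ) := by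
        rw [tsum_congr (fun h => mul_pow ((2:ℝ≥0∞) ^ s) (c1 h + c2 h) 2),
          ENNReal.tsum_mul_left, ENNReal.mul_rpow_of_nonneg _ _ (by norm_num : (0:ℝ) ≤ 1/2),
          sqrt_sq]
    _ ≤ 2 ^ s * ((∑' h, c1 h ^ 2) ^ (1/2:ℝ) + (∑' h, c2 h ^ 2) ^ (1/2:ℝ)) :=
        mul_le_mul' le_rfl (tsum_minkowski c1 c2)
    _ ≤ 2 ^ s * ((∑' m, FA m ^ 2) ^ (1/2:ℝ) * (∑' m, dB m)
          + (∑' m, GB m ^ 2) ^ (1/2:ℝ) * (∑' m, dA m)) := by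
        refine mul_le_mul' le_rfl (add_le_add ?_ ?_)
        · calc (∑' h, c1 h ^ 2) ^ (1/2:ℝ)
              ≤ ((∑' m, FA m ^ 2) * (∑' m, dB m) ^ 2) ^ (1/2:ℝ) :=
                ENNReal.rpow_le_rpow (tsum_young FA dB) (by norm_num)
            _ = (∑' m, FA m ^ 2) ^ (1/2:ℝ) * (∑' m, dB m) := by
                rw [ENNReal.mul_rpow_of_nonneg _ _ (by norm_num : (0:ℝ) ≤ 1/2), sqrt_sq]
        · calc (∑' h, c2 h ^ 2) ^ (1/2:ℝ)
              ≤ ((∑' m, GB m ^ 2) * (∑' m, dA m) ^ 2) ^ (1/2:ℝ) :=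
                ENNReal.rpow_le_rpow (tsum_young GB dA) (by norm_num)
            _ = (∑' m, GB m ^ 2) ^ (1/2:ℝ) * (∑' m, dA m) := by
                rw [ENNReal.mul_rpow_of_nonneg _ _ (by norm_num : (0:ℝ) ≤ 1/2), sqrt_sq]

end Stmt4Aux

theorem stmt4 (b : ℕ) (hb : 1 ≤ b) (s₀ s : ℝ) (hs₀ : (b : ℝ) / 2 < s₀) (hs : s₀ ≤ s) :
    ∃ C₀ C : ℝ, 1 ≤ C₀ ∧ C₀ ≤ C ∧
      ∀ A B : (Fin b → ℤ) → (Fin b → ℤ) → ℂ, decayNorm A s < ⊤ → decayNorm B s < ⊤ →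
        (∀ k k' : Fin b → ℤ, Summable fun j : Fin b → ℤ => ‖A k j * B j k'‖) ∧
        decayNorm (fun k k' => ∑' j : Fin b → ℤ, A k j * B j k') s ≤
          ENNReal.ofReal C * decayNorm A s₀ * decayNorm B s +
            ENNReal.ofReal C₀ * decayNorm A s * decayNorm B s₀ ∧
        decayNorm (fun k k' => ∑' j : Fin b → ℤ, A k j * B j k') s ≤
          ENNReal.ofReal C * decayNorm A s * decayNorm B s := by
  classical
  open Stmt4Aux in
  have hb0 : (0:ℝ) < b := by exact_mod_cast hb
  have hs₀0 : 0 < s₀ := lt_trans (by positivity) hs₀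
  have hs0 : 0 ≤ s := le_trans hs₀0.le hs
  set K : ℝ≥0∞ := ∑' m : Fin b → ℤ, v m ^ (-(2*s₀)) with hK
  have hKlt : K ≠ ⊤ := (K_lt_top hb (by linarith : (b:ℝ) < 2*s₀)).ne
  set c : ℝ≥0∞ := 2 ^ s * K ^ (1/2:ℝ) with hc
  have hcne : c ≠ ⊤ := by
    apply ENNReal.mul_ne_top
    · exact ENNReal.rpow_ne_top_of_nonneg hs0 (by norm_num)
    · exact ENNReal.rpow_ne_top_of_nonneg (by norm_num) hKlt
  have h2cne : 2 * c ≠ ⊤ := ENNReal.mul_ne_top (by norm_num) hcne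
  refine ⟨(2*c).toReal + 1, (2*c).toReal + 1,
    le_add_of_nonneg_left ENNReal.toReal_nonneg, le_rfl, ?_⟩
  have hofReal : ENNReal.ofReal ((2*c).toReal + 1) = 2 * c + 1 := by
    rw [ENNReal.ofReal_add ENNReal.toReal_nonneg zero_le_one, ENNReal.ofReal_toReal h2cne,
      ENNReal.ofReal_one]
  intro A B hA hB
  set dA : (Fin b → ℤ) → ℝ≥0∞ := fun h => ⨆ k, (‖A k (k - h)‖₊ : ℝ≥0∞) with hdA
  set dB : (Fin b → ℤ) → ℝ≥0∞ := fun h => ⨆ k, (‖B k (k - h)‖₊ : ℝ≥0∞) with hdB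
  have hAj : ∀ k j : Fin b → ℤ, (‖A k j‖₊ : ℝ≥0∞) ≤ dA (k - j) := by
    intro k j
    have := le_iSup (fun k' => (‖A k' (k' - (k - j))‖₊ : ℝ≥0∞)) k
    simpa [sub_sub_cancel] using this
  have hBj : ∀ j k' : Fin b → ℤ, (‖B j k'‖₊ : ℝ≥0∞) ≤ dB (j - k') := by
    intro j k'
    have := le_iSup (fun j' => (‖B j' (j' - (j - k'))‖₊ : ℝ≥0∞)) j
    simpa [sub_sub_cancel] using this
  -- convolution bound
  have conv : ∀ k k' : Fin b → ℤ, (‖∑' j : Fin b → ℤ, A k j * B j k'‖₊ : ℝ≥0∞) ≤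
      ∑' m : Fin b → ℤ, dA m * dB ((k - k') - m) := by
    intro k k'
    calc (‖∑' j : Fin b → ℤ, A k j * B j k'‖₊ : ℝ≥0∞)
        ≤ ∑' j : Fin b → ℤ, (‖A k j * B j k'‖₊ : ℝ≥0∞) := ennnorm_tsum_le _
      _ ≤ ∑' j : Fin b → ℤ, dA (k - j) * dB (j - k') := by
          refine ENNReal.tsum_le_tsum fun j => ?_
          rw [nnnorm_mul, ENNReal.coe_mul]
          exact mul_le_mul' (hAj k j) (hBj j k')
      _ = ∑' m : Fin b → ℤ, dA m * dB ((k - k') - m) := by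
          rw [← tsum_sub_left k (fun j => dA (k - j) * dB (j - k'))]
          refine tsum_congr fun m => ?_
          rw [sub_sub_cancel]
          congr 2
          abel
  -- ℓ¹ bounds
  have hl1A : ∑' m : Fin b → ℤ, dA m ≤ K ^ (1/2:ℝ) * decayNorm A s₀ := by
    rw [decay_eq]
    exact l1_bound s₀ dA
  have hl1B : ∑' m : Fin b → ℤ, dB m ≤ K ^ (1/2:ℝ) * decayNorm B s₀ := by
    rw [decay_eq]
    exact l1_bound s₀ dB
  have hAs₀ : decayNorm A s₀ < ⊤ := lt_of_le_of_lt (decay_mono A hs) hA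
  have hBs₀ : decayNorm B s₀ < ⊤ := lt_of_le_of_lt (decay_mono B hs) hB
  have hl1Af : (∑' m : Fin b → ℤ, dA m) ≠ ⊤ :=
    (lt_of_le_of_lt hl1A (ENNReal.mul_lt_top
      (ENNReal.rpow_lt_top_of_nonneg (by norm_num) hKlt) hAs₀)).ne
  have hl1Bf : (∑' m : Fin b → ℤ, dB m) ≠ ⊤ :=
    (lt_of_le_of_lt hl1B (ENNReal.mul_lt_top
      (ENNReal.rpow_lt_top_of_nonneg (by norm_num) hKlt) hBs₀)).ne
  -- summability
  have hsummable : ∀ k k' : Fin b → ℤ, Summable fun j : Fin b → ℤ => ‖A k j * B j k'‖ := by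
    intro k k'
    have hle : (∑' j : Fin b → ℤ, (‖A k j * B j k'‖₊ : ℝ≥0∞)) ≤
        (∑' m : Fin b → ℤ, dA m) * ∑' m : Fin b → ℤ, dB m := by
      calc ∑' j : Fin b → ℤ, (‖A k j * B j k'‖₊ : ℝ≥0∞)
          ≤ ∑' j : Fin b → ℤ, dA (k - j) * dB (j - k') := by
            refine ENNReal.tsum_le_tsum fun j => ?_
            rw [nnnorm_mul, ENNReal.coe_mul]
            exact mul_le_mul' (hAj k j) (hBj j k')
        _ ≤ ∑' j : Fin b → ℤ, dA (k - j) * ∑' m : Fin b → ℤ, dB m :=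
            ENNReal.tsum_le_tsum fun j => mul_le_mul' le_rfl (ENNReal.le_tsum _)
        _ = (∑' j : Fin b → ℤ, dA (k - j)) * ∑' m : Fin b → ℤ, dB m := ENNReal.tsum_mul_right
        _ = (∑' m : Fin b → ℤ, dA m) * ∑' m : Fin b → ℤ, dB m := by
            rw [tsum_sub_left k dA]
    have hfin : (∑' j : Fin b → ℤ, (‖A k j * B j k'‖₊ : ℝ≥0∞)) ≠ ⊤ :=
      ne_top_of_le_ne_top (ENNReal.mul_ne_top hl1Af hl1Bf) hle
    have hsm : Summable fun j : Fin b → ℤ => ‖A k j * B j k'‖₊ :=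
      ENNReal.tsum_coe_ne_top_iff_summable.1 hfin
    simpa [coe_nnnorm] using NNReal.summable_coe.2 hsm
  have hdP : ∀ h : Fin b → ℤ,
      (⨆ k : Fin b → ℤ, (‖(fun k k' => ∑' j : Fin b → ℤ, A k j * B j k') k (k - h)‖₊ : ℝ≥0∞)) ≤
        ∑' m : Fin b → ℤ, dA m * dB (h - m) := by
    intro h
    refine iSup_le fun k => ?_
    have := conv k (k - h)
    simpa [sub_sub_cancel] using this
  have hkey : decayNorm (fun k k' => ∑' j : Fin b → ℤ, A k j * B j k') s ≤
      c * (decayNorm A s * decayNorm B s₀) + c * (decayNorm B s * decayNorm A s₀) := by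
    have h2 : (∑' m : Fin b → ℤ, (v m ^ s * dA m) ^ 2) ^ (1/2:ℝ) = decayNorm A s :=
      (decay_eq A s).symm
    have h3 : (∑' m : Fin b → ℤ, (v m ^ s * dB m) ^ 2) ^ (1/2:ℝ) = decayNorm B s :=
      (decay_eq B s).symm
    calc decayNorm (fun k k' => ∑' j : Fin b → ℤ, A k j * B j k') s
        = (∑' h : Fin b → ℤ, (v h ^ s *
            ⨆ k : Fin b → ℤ, (‖(fun k k' => ∑' j : Fin b → ℤ, A k j * B j k') k (k - h)‖₊ :
              ℝ≥0∞)) ^ 2) ^ (1/2:ℝ) := decay_eq _ s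
      _ ≤ 2 ^ s * ((∑' m : Fin b → ℤ, (v m ^ s * dA m) ^ 2) ^ (1/2:ℝ) *
            (∑' m : Fin b → ℤ, dB m)
            + (∑' m : Fin b → ℤ, (v m ^ s * dB m) ^ 2) ^ (1/2:ℝ) *
            (∑' m : Fin b → ℤ, dA m)) := core_est hs0 dA dB _ hdP
      _ = 2 ^ s * (decayNorm A s * (∑' m : Fin b → ℤ, dB m)
            + decayNorm B s * (∑' m : Fin b → ℤ, dA m)) := by rw [h2, h3]
      _ ≤ 2 ^ s * (decayNorm A s * (K ^ (1/2:ℝ) * decayNorm B s₀)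
            + decayNorm B s * (K ^ (1/2:ℝ) * decayNorm A s₀)) := by
          gcongr
      _ = c * (decayNorm A s * decayNorm B s₀) + c * (decayNorm B s * decayNorm A s₀) := by
          rw [hc]
          ring
  have hcle : c ≤ 2 * c + 1 := le_trans (by rw [two_mul]; exact le_self_add) le_self_add
  refine ⟨hsummable, ?_, ?_⟩
  · calc decayNorm (fun k k' => ∑' j : Fin b → ℤ, A k j * B j k') s
        ≤ c * (decayNorm A s * decayNorm B s₀) + c * (decayNorm B s * decayNorm A s₀) := hkey
      _ ≤ (2*c+1) * (decayNorm A s * decayNorm B s₀)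
            + (2*c+1) * (decayNorm B s * decayNorm A s₀) :=
          add_le_add (mul_le_mul' hcle le_rfl) (mul_le_mul' hcle le_rfl)
      _ = ENNReal.ofReal ((2*c).toReal + 1) * decayNorm A s₀ * decayNorm B s +
          ENNReal.ofReal ((2*c).toReal + 1) * decayNorm A s * decayNorm B s₀ := by
          rw [hofReal]
          ring
  · calc decayNorm (fun k k' => ∑' j : Fin b → ℤ, A k j * B j k') s
        ≤ c * (decayNorm A s * decayNorm B s₀) + c * (decayNorm B s * decayNorm A s₀) := hkey
      _ ≤ c * (decayNorm A s * decayNorm B s) + c * (decayNorm B s * decayNorm A s) := by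
          gcongr
          · exact decay_mono B hs
          · exact decay_mono A hs
      _ = (2 * c) * (decayNorm A s * decayNorm B s) := by ring
      _ ≤ (2 * c + 1) * (decayNorm A s * decayNorm B s) := mul_le_mul' le_self_add le_rfl
      _ = ENNReal.ofReal ((2*c).toReal + 1) * decayNorm A s * decayNorm B s := by
          rw [hofReal, mul_assoc]
end

section
/- Let b ≥ 1 be an integer and s ≥ s₀ > b/2. There exists a constant C(s) > 0 such that for every matrix A on ℤᵇ with |A|_s < ∞ and every sequence h : ℤᵇ → ℂ with ‖h‖_s < ∞, the action (Ah)_k := Σ_{k'∈ℤᵇ} A_k^{k'} h_{k'} is well defined (the sums converge absolutely) and satisfies ‖Ah‖_s ≤ C(s)(|A|_{s₀}‖h‖_s + |A|_s‖h‖_{s₀}). -/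
open scoped ENNReal NNReal

namespace Tame

lemma one_le_wt {b : ℕ} (i : Fin b → ℤ) : 1 ≤ wt i := le_max_left _ _

lemma wt_pos {b : ℕ} (i : Fin b → ℤ) : 0 < wt i := lt_of_lt_of_le one_pos (one_le_wt i)

noncomputable def W {b : ℕ} (i : Fin b → ℤ) : ℝ≥0∞ := ENNReal.ofReal (wt i)

lemma one_le_W {b : ℕ} (i : Fin b → ℤ) : 1 ≤ W i := by
  rw [W, ← ENNReal.ofReal_one]
  exact ENNReal.ofReal_le_ofReal (one_le_wt i)

lemma W_ne_top {b : ℕ} (i : Fin b → ℤ) : W i ≠ ⊤ := ENNReal.ofReal_ne_top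

lemma W_ne_zero {b : ℕ} (i : Fin b → ℤ) : W i ≠ 0 :=
  fun h => by simpa [h] using one_le_W i

lemma ofReal_wt_rpow {b : ℕ} (i : Fin b → ℤ) (t : ℝ) :
    ENNReal.ofReal (wt i ^ t) = W i ^ t :=
  (ENNReal.ofReal_rpow_of_pos (wt_pos i)).symm

lemma wt_triangle {b : ℕ} (x y : Fin b → ℤ) : wt (x + y) ≤ wt x + wt y := by
  unfold wt
  rcases max_cases 1 ((absIdx (x + y) : ℝ)) with ⟨h1, _⟩ | ⟨h1, _⟩
  · rw [h1]
    have := one_le_wt x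
    have := one_le_wt y
    unfold wt at *
    nlinarith [le_max_left 1 ((absIdx x : ℝ)), le_max_left 1 ((absIdx y : ℝ))]
  · rw [h1]
    have habs : (absIdx (x + y) : ℝ) ≤ (absIdx x : ℝ) + (absIdx y : ℝ) := by
      have : absIdx (x + y) ≤ absIdx x + absIdx y := by
        apply Finset.sup_le
        intro k _
        calc ((x + y) k).natAbs = (x k + y k).natAbs := rfl
          _ ≤ (x k).natAbs + (y k).natAbs := Int.natAbs_add_le _ _
          _ ≤ absIdx x + absIdx y := by
              exact add_le_add (Finset.le_sup (f := fun k => (x k).natAbs) (Finset.mem_univ k))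
                (Finset.le_sup (f := fun k => (y k).natAbs) (Finset.mem_univ k))
      exact_mod_cast this
    calc (absIdx (x + y) : ℝ) ≤ (absIdx x : ℝ) + (absIdx y : ℝ) := habs
      _ ≤ wt x + wt y := add_le_add (le_max_right _ _) (le_max_right _ _)

lemma tsum_mul_le_cs {ι : Type*} [Countable ι] (f g : ι → ℝ≥0∞) :
    ∑' i, f i * g i ≤
      (∑' i, f i ^ (2 : ℝ)) ^ (1/2 : ℝ) * (∑' i, g i ^ (2 : ℝ)) ^ (1/2 : ℝ) := by
  letI : MeasurableSpace ι := ⊤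
  haveI : MeasurableSingletonClass ι := ⟨fun _ => trivial⟩
  have hpq : Real.HolderConjugate 2 2 := Real.HolderConjugate.two_two
  have hf : Measurable f := fun s _ => trivial
  have hg : Measurable g := fun s _ => trivial
  have := ENNReal.lintegral_mul_le_Lp_mul_Lq (MeasureTheory.Measure.count (α := ι)) hpq
    hf.aemeasurable hg.aemeasurable
  simpa [MeasureTheory.lintegral_count] using this

lemma rpow_two' (x : ℝ≥0∞) : x ^ (2 : ℝ) = x ^ 2 := by
  rw [show (2 : ℝ) = ((2 : ℕ) : ℝ) by norm_num, ENNReal.rpow_natCast]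

lemma sq_rpow_half (x : ℝ≥0∞) : (x ^ (1/2 : ℝ)) ^ 2 = x := by
  rw [← ENNReal.rpow_natCast (x ^ (1/2 : ℝ)) 2, ← ENNReal.rpow_mul]
  norm_num

lemma tsum_pi_prod (p : ℤ → ℝ≥0∞) :
    ∀ n : ℕ, ∑' h : Fin n → ℤ, ∏ i, p (h i) = (∑' m : ℤ, p m) ^ n := by
  intro n
  induction n with
  | zero =>
      rw [tsum_eq_single (fun i => i.elim0)
        (fun b' hb' => absurd (funext fun i => i.elim0) hb')]
      simp
  | succ n ih =>
      rw [← (Fin.consEquiv (fun _ : Fin (n+1) => ℤ)).tsum_eq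
        (fun h : Fin (n+1) → ℤ => ∏ i, p (h i))]
      simp only [Fin.consEquiv_apply]
      rw [ENNReal.tsum_prod']
      have key : ∀ (x : ℤ) (f : Fin n → ℤ),
          (∏ i : Fin (n+1), p ((Fin.cons x f : Fin (n+1) → ℤ) i)) = p x * ∏ i, p (f i) := by
        intro x f; rw [Fin.prod_univ_succ]; simp
      calc ∑' (x : ℤ) (f : Fin n → ℤ), ∏ i, p ((Fin.cons x f : Fin (n+1) → ℤ) i)
          = ∑' (x : ℤ) (f : Fin n → ℤ), p x * ∏ i, p (f i) :=
            tsum_congr fun x => tsum_congr fun f => key x f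
        _ = ∑' (x : ℤ), p x * ∑' f : Fin n → ℤ, ∏ i, p (f i) :=
            tsum_congr fun x => ENNReal.tsum_mul_left
        _ = (∑' m : ℤ, p m) * ∑' f : Fin n → ℤ, ∏ i, p (f i) := ENNReal.tsum_mul_right
        _ = (∑' m : ℤ, p m) ^ (n + 1) := by rw [ih]; ring

lemma K0_lt_top {b : ℕ} (hb : 1 ≤ b) {s₀ : ℝ} (hs₀ : (b : ℝ) / 2 < s₀) :
    ∑' h : Fin b → ℤ, W h ^ (-(2 * s₀)) < ⊤ := by
  have hb0 : (0 : ℝ) < b := by exact_mod_cast hb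
  set q : ℝ := 2 * s₀ / b with hq_def
  have hq : 1 < q := by rw [hq_def, lt_div_iff₀ hb0]; linarith
  have hq0 : 0 ≤ q := by linarith
  set p : ℤ → ℝ≥0∞ := fun m => ENNReal.ofReal ((max 1 |(m : ℝ)|) ^ (-q)) with hp_def
  have hpoint : ∀ h : Fin b → ℤ, W h ^ (-(2 * s₀)) ≤ ∏ i, p (h i) := by
    intro h
    rw [← ofReal_wt_rpow]
    have hfac : ∀ i : Fin b, max 1 |((h i : ℝ))| ≤ wt h := by
      intro i
      apply max_le (one_le_wt h)
      have h1 : ((h i).natAbs : ℝ) ≤ ((absIdx h : ℕ) : ℝ) := by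
        exact_mod_cast Nat.cast_le.mpr
          (Finset.le_sup (f := fun k => (h k).natAbs) (Finset.mem_univ i))
      calc |((h i : ℝ))| = ((h i).natAbs : ℝ) := by
            rw [Nat.cast_natAbs]; norm_num
        _ ≤ (absIdx h : ℝ) := h1
        _ ≤ wt h := le_max_right _ _
    have hfacpos : ∀ i : Fin b, (0:ℝ) ≤ max 1 |((h i : ℝ))| := fun i =>
      le_trans zero_le_one (le_max_left _ _)
    have hprod : (∏ i, max 1 |((h i : ℝ))|) ≤ wt h ^ b := by
      calc (∏ i, max 1 |((h i : ℝ))|) ≤ ∏ _i : Fin b, wt h :=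
            Finset.prod_le_prod (fun i _ => hfacpos i) (fun i _ => hfac i)
        _ = wt h ^ b := by rw [Finset.prod_const, Finset.card_univ, Fintype.card_fin]
    have hprodpos : (0:ℝ) < ∏ i, max 1 |((h i : ℝ))| :=
      Finset.prod_pos fun i _ => lt_of_lt_of_le one_pos (le_max_left _ _)
    have hstep : (∏ i, max 1 |((h i : ℝ))|) ^ q ≤ wt h ^ (2 * s₀) := by
      calc (∏ i, max 1 |((h i : ℝ))|) ^ q ≤ (wt h ^ b) ^ q :=
            Real.rpow_le_rpow hprodpos.le hprod hq0
        _ = wt h ^ ((b : ℝ) * q) := by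
            rw [← Real.rpow_natCast (wt h) b, ← Real.rpow_mul (wt_pos h).le]
        _ = wt h ^ (2 * s₀) := by
            congr 1
            rw [hq_def]; field_simp [hb0.ne']
    have hinv : wt h ^ (-(2 * s₀)) ≤ (∏ i, max 1 |((h i : ℝ))|) ^ (-q) := by
      rw [Real.rpow_neg (wt_pos h).le, Real.rpow_neg hprodpos.le]
      exact inv_anti₀ (Real.rpow_pos_of_pos hprodpos q) hstep
    calc ENNReal.ofReal (wt h ^ (-(2 * s₀)))
        ≤ ENNReal.ofReal ((∏ i, max 1 |((h i : ℝ))|) ^ (-q)) :=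
          ENNReal.ofReal_le_ofReal hinv
      _ = ∏ i, p (h i) := by
          rw [← Real.finset_prod_rpow Finset.univ _ (fun i _ => hfacpos i) (-q),
            ENNReal.ofReal_prod_of_nonneg (fun i _ => Real.rpow_nonneg (hfacpos i) (-q))]
  have h1d : ∑' m : ℤ, p m < ⊤ := by
    have hsum : Summable fun m : ℤ => |(m : ℝ)| ^ (-q) := Real.summable_abs_int_rpow hq
    rw [ENNReal.tsum_eq_add_tsum_ite (0 : ℤ)]
    apply ENNReal.add_lt_top.mpr
    constructor
    · exact ENNReal.ofReal_lt_top
    · refine lt_of_le_of_lt (ENNReal.tsum_le_tsum (g := fun m : ℤ =>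
          ENNReal.ofReal (|(m : ℝ)| ^ (-q))) fun m => ?_) ?_
      · by_cases hm : m = 0
        · simp [hm]
        · simp only [hm, if_false, hp_def]
          apply ENNReal.ofReal_le_ofReal
          have : max 1 |(m : ℝ)| = |(m : ℝ)| := by
            apply max_eq_right
            have : (1 : ℤ) ≤ |m| := Int.one_le_abs hm
            calc (1:ℝ) ≤ (|m| : ℤ) := by exact_mod_cast this
              _ = |(m : ℝ)| := by push_cast; rfl
          rw [this]
      · rw [← ENNReal.ofReal_tsum_of_nonneg (fun m => Real.rpow_nonneg (abs_nonneg _) _) hsum]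
        exact ENNReal.ofReal_lt_top
  calc ∑' h : Fin b → ℤ, W h ^ (-(2 * s₀)) ≤ ∑' h : Fin b → ℤ, ∏ i, p (h i) :=
        ENNReal.tsum_le_tsum hpoint
    _ = (∑' m : ℤ, p m) ^ b := tsum_pi_prod p b
    _ < ⊤ := ENNReal.pow_lt_top h1d

lemma real_weight_key {s₀ s x y z : ℝ} (hs₀ : 0 < s₀) (hss : s₀ ≤ s)
    (hx : 1 ≤ x) (hy : 1 ≤ y) (hz0 : 0 ≤ z) (hz : z ≤ x + y) :
    z ^ (2*s) * (min x y) ^ (2*s₀) ≤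
      4 ^ s * (x ^ (2*s) * y ^ (2*s₀) + x ^ (2*s₀) * y ^ (2*s)) := by
  have hs0 : 0 < s := lt_of_lt_of_le hs₀ hss
  have hx0 : (0:ℝ) ≤ x := le_trans zero_le_one hx
  have hy0 : (0:ℝ) ≤ y := le_trans zero_le_one hy
  have hmax0 : (0:ℝ) ≤ max x y := le_trans hx0 (le_max_left _ _)
  have hmax : z ≤ 2 * max x y := by
    rcases le_total x y with hxy | hxy
    · rw [max_eq_right hxy]; linarith
    · rw [max_eq_left hxy]; linarith
  have h4 : (2:ℝ) ^ (2*s) = 4 ^ s := by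
    rw [show (2:ℝ)*s = ((2:ℕ):ℝ)*s by norm_num, Real.rpow_natCast_mul (by norm_num : (0:ℝ) ≤ 2)]
    norm_num
  have hz2s : z ^ (2*s) ≤ 4 ^ s * (max x y) ^ (2*s) := by
    calc z ^ (2*s) ≤ (2 * max x y) ^ (2*s) :=
          Real.rpow_le_rpow hz0 hmax (by linarith)
      _ = 2 ^ (2*s) * (max x y) ^ (2*s) := Real.mul_rpow (by norm_num) hmax0
      _ = 4 ^ s * (max x y) ^ (2*s) := by rw [h4]
  have hmaxmin : (max x y) ^ (2*s) * (min x y) ^ (2*s₀) ≤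
      x ^ (2*s) * y ^ (2*s₀) + x ^ (2*s₀) * y ^ (2*s) := by
    rcases le_total x y with hxy | hxy
    · rw [max_eq_right hxy, min_eq_left hxy]
      have h1 : (0:ℝ) ≤ x ^ (2*s) * y ^ (2*s₀) := by positivity
      linarith [mul_comm (y ^ (2*s)) (x ^ (2*s₀))]
    · rw [max_eq_left hxy, min_eq_right hxy]
      have h1 : (0:ℝ) ≤ x ^ (2*s₀) * y ^ (2*s) := by positivity
      linarith
  have hmin0 : (0:ℝ) ≤ (min x y) ^ (2*s₀) := by positivity
  calc z ^ (2*s) * (min x y) ^ (2*s₀)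
      ≤ (4 ^ s * (max x y) ^ (2*s)) * (min x y) ^ (2*s₀) :=
        mul_le_mul_of_nonneg_right hz2s hmin0
    _ = 4 ^ s * ((max x y) ^ (2*s) * (min x y) ^ (2*s₀)) := by ring
    _ ≤ 4 ^ s * (x ^ (2*s) * y ^ (2*s₀) + x ^ (2*s₀) * y ^ (2*s)) := by
        apply mul_le_mul_of_nonneg_left hmaxmin (by positivity)

lemma W_key {b : ℕ} {s₀ s : ℝ} (hs₀ : 0 < s₀) (hss : s₀ ≤ s) (u v z : Fin b → ℤ)
    (hz : wt z ≤ wt u + wt v) :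
    W z ^ (2*s) * (min (W u) (W v)) ^ (2*s₀) ≤
      ENNReal.ofReal (4 ^ s) *
        (W u ^ (2*s) * W v ^ (2*s₀) + W u ^ (2*s₀) * W v ^ (2*s)) := by
  have hmin : min (W u) (W v) = ENNReal.ofReal (min (wt u) (wt v)) := by
    rcases le_total (wt u) (wt v) with h | h
    · rw [min_eq_left (show W u ≤ W v from ENNReal.ofReal_le_ofReal h), min_eq_left h]; rfl
    · rw [min_eq_right (show W v ≤ W u from ENNReal.ofReal_le_ofReal h), min_eq_right h]; rfl
  have hminpos : 0 < min (wt u) (wt v) := lt_min (wt_pos u) (wt_pos v)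
  have lhs_eq : W z ^ (2*s) * (min (W u) (W v)) ^ (2*s₀) =
      ENNReal.ofReal (wt z ^ (2*s) * (min (wt u) (wt v)) ^ (2*s₀)) := by
    rw [hmin, ← ofReal_wt_rpow, ENNReal.ofReal_rpow_of_pos hminpos,
      ← ENNReal.ofReal_mul (Real.rpow_nonneg (wt_pos z).le _)]
  have rhs_eq : ENNReal.ofReal (4 ^ s) *
      (W u ^ (2*s) * W v ^ (2*s₀) + W u ^ (2*s₀) * W v ^ (2*s)) =
      ENNReal.ofReal (4 ^ s *
        (wt u ^ (2*s) * wt v ^ (2*s₀) + wt u ^ (2*s₀) * wt v ^ (2*s))) := by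
    rw [← ofReal_wt_rpow, ← ofReal_wt_rpow, ← ofReal_wt_rpow, ← ofReal_wt_rpow,
      ← ENNReal.ofReal_mul (Real.rpow_nonneg (wt_pos u).le _),
      ← ENNReal.ofReal_mul (Real.rpow_nonneg (wt_pos u).le _),
      ← ENNReal.ofReal_add
        (mul_nonneg (Real.rpow_nonneg (wt_pos u).le _) (Real.rpow_nonneg (wt_pos v).le _))
        (mul_nonneg (Real.rpow_nonneg (wt_pos u).le _) (Real.rpow_nonneg (wt_pos v).le _)),
      ← ENNReal.ofReal_mul (Real.rpow_nonneg (by norm_num : (0:ℝ) ≤ 4) s)]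
  rw [lhs_eq, rhs_eq]
  exact ENNReal.ofReal_le_ofReal
    (real_weight_key hs₀ hss (one_le_wt u) (one_le_wt v) (wt_pos z).le hz)

end Tame

theorem stmt5 (b : ℕ) (hb : 1 ≤ b) (s₀ s : ℝ) (hs₀ : (b : ℝ) / 2 < s₀) (hs : s₀ ≤ s) :
    ∃ C : ℝ, 0 < C ∧
      ∀ (A : (Fin b → ℤ) → (Fin b → ℤ) → ℂ) (h : (Fin b → ℤ) → ℂ),
        decayNorm A s < ⊤ → sobNorm h s < ⊤ →
        (∀ k : Fin b → ℤ, Summable fun k' : Fin b → ℤ => ‖A k k' * h k'‖) ∧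
        sobNorm (fun k => ∑' k' : Fin b → ℤ, A k k' * h k') s ≤
          ENNReal.ofReal C * (decayNorm A s₀ * sobNorm h s + decayNorm A s * sobNorm h s₀) := by
  classical
  open Tame in
  have hs₀pos : 0 < s₀ := lt_of_le_of_lt (by positivity) hs₀
  have hspos : 0 < s := lt_of_lt_of_le hs₀pos hs
  set K₀ : ℝ≥0∞ := ∑' d : Fin b → ℤ, Tame.W d ^ (-(2*s₀)) with hK
  have hK₀ : K₀ < ⊤ := Tame.K0_lt_top hb hs₀
  set E : ℝ≥0∞ := (2 * K₀ * ENNReal.ofReal (4 ^ s)) ^ (1/2 : ℝ) with hE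
  have hEtop : E ≠ ⊤ := by
    apply ENNReal.rpow_ne_top_of_nonneg (by norm_num)
    exact ENNReal.mul_ne_top (ENNReal.mul_ne_top (by norm_num) hK₀.ne) ENNReal.ofReal_ne_top
  refine ⟨E.toReal + 1, by positivity, ?_⟩
  intro A h hA hh
  set a : (Fin b → ℤ) → ℝ≥0∞ := fun d => ⨆ k, (‖A k (k - d)‖₊ : ℝ≥0∞) with ha
  set H : (Fin b → ℤ) → ℝ≥0∞ := fun k => (‖h k‖₊ : ℝ≥0∞) with hHdef
  set D : ℝ → ℝ≥0∞ := fun t => ∑' d, Tame.W d ^ (2*t) * a d ^ 2 with hD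
  set N : ℝ → ℝ≥0∞ := fun t => ∑' k, Tame.W k ^ (2*t) * H k ^ 2 with hN
  have hDrep : ∀ t, decayNorm A t = D t ^ (1/2 : ℝ) := by
    intro t
    rw [decayNorm, hD]
    congr 1
    exact tsum_congr fun d => by rw [Tame.ofReal_wt_rpow]
  have hNrep : ∀ t, sobNorm h t = N t ^ (1/2 : ℝ) := by
    intro t
    rw [sobNorm, hN]
    congr 1
    exact tsum_congr fun k => by rw [Tame.ofReal_wt_rpow]
  have hDs : D s < ⊤ := by
    have : D s = (decayNorm A s) ^ 2 := by rw [hDrep]; exact (Tame.sq_rpow_half _).symm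
    rw [this]; exact ENNReal.pow_lt_top hA
  have hNs : N s < ⊤ := by
    have : N s = (sobNorm h s) ^ 2 := by rw [hNrep]; exact (Tame.sq_rpow_half _).symm
    rw [this]; exact ENNReal.pow_lt_top hh
  have hDmono : D s₀ ≤ D s := by
    apply ENNReal.tsum_le_tsum
    intro d
    exact mul_le_mul_left
      (ENNReal.rpow_le_rpow_of_exponent_le (Tame.one_le_W d) (by linarith)) _
  have hF1 : ∀ k k' : Fin b → ℤ, (‖A k k'‖₊ : ℝ≥0∞) ≤ a (k - k') := by
    intro k k'
    have h1 : (‖A k (k - (k - k'))‖₊ : ℝ≥0∞) ≤ a (k - k') :=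
      le_iSup (f := fun m => (‖A m (m - (k - k'))‖₊ : ℝ≥0∞)) k
    rwa [sub_sub_cancel] at h1
  -- the weighted min
  have hm1 : ∀ k k' : Fin b → ℤ, (1:ℝ≥0∞) ≤ min (Tame.W (k - k')) (Tame.W k') :=
    fun k k' => le_min (Tame.one_le_W _) (Tame.one_le_W _)
  have hm0 : ∀ k k' : Fin b → ℤ, min (Tame.W (k - k')) (Tame.W k') ≠ 0 :=
    fun k k' => fun hc => by simpa [hc] using hm1 k k'
  have hmt : ∀ k k' : Fin b → ℤ, min (Tame.W (k - k')) (Tame.W k') ≠ ⊤ :=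
    fun k k' => ne_top_of_le_ne_top (Tame.W_ne_top k') (min_le_right _ _)
  -- Cauchy-Schwarz step
  have hCS : ∀ k : Fin b → ℤ, (∑' k', a (k - k') * H k') ^ 2 ≤
      (2 * K₀) * ∑' k', (min (Tame.W (k - k')) (Tame.W k')) ^ (2*s₀) *
        (a (k - k') ^ 2 * H k' ^ 2) := by
    intro k
    set m : (Fin b → ℤ) → ℝ≥0∞ := fun k' => min (Tame.W (k - k')) (Tame.W k') with hm
    have hsplit : ∀ k', a (k - k') * H k' =
        (m k' ^ (-s₀)) * (m k' ^ s₀ * (a (k - k') * H k')) := by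
      intro k'
      rw [← mul_assoc, ← ENNReal.rpow_add _ _ (hm0 k k') (hmt k k')]
      norm_num
    have hcs := Tame.tsum_mul_le_cs (fun k' => m k' ^ (-s₀))
      (fun k' => m k' ^ s₀ * (a (k - k') * H k'))
    have hf2 : ∀ k', (m k' ^ (-s₀)) ^ (2:ℝ) = m k' ^ (-(2*s₀)) := by
      intro k'
      rw [← ENNReal.rpow_mul]
      norm_num
      ring_nf
    have hg2 : ∀ k', (m k' ^ s₀ * (a (k - k') * H k')) ^ (2:ℝ) =
        m k' ^ (2*s₀) * (a (k - k') ^ 2 * H k' ^ 2) := by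
      intro k'
      rw [Tame.rpow_two', mul_pow, mul_pow, ← ENNReal.rpow_natCast (m k' ^ s₀) 2,
        ← ENNReal.rpow_mul]
      norm_num
      ring_nf
    have hsum_f : ∑' k', (m k' ^ (-s₀)) ^ (2:ℝ) ≤ 2 * K₀ := by
      calc ∑' k', (m k' ^ (-s₀)) ^ (2:ℝ) = ∑' k', m k' ^ (-(2*s₀)) :=
            tsum_congr hf2
        _ ≤ ∑' k', (Tame.W (k - k') ^ (-(2*s₀)) + Tame.W k' ^ (-(2*s₀))) := by
            apply ENNReal.tsum_le_tsum
            intro k'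
            rcases min_cases (Tame.W (k - k')) (Tame.W k') with ⟨hmeq, _⟩ | ⟨hmeq, _⟩
            · rw [show m k' = Tame.W (k - k') from hmeq]; exact le_self_add
            · rw [show m k' = Tame.W k' from hmeq]; exact le_add_self
        _ = (∑' k', Tame.W (k - k') ^ (-(2*s₀))) + ∑' k', Tame.W k' ^ (-(2*s₀)) :=
            ENNReal.tsum_add
        _ = K₀ + K₀ := by
            congr 1
            calc ∑' k', Tame.W (k - k') ^ (-(2*s₀))
                = ∑' d, Tame.W d ^ (-(2*s₀)) := by
                  rw [← (Equiv.subLeft k).tsum_eq (fun d => Tame.W d ^ (-(2*s₀)))]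
                  exact tsum_congr fun x => by simp [Equiv.subLeft]
              _ = K₀ := rfl
        _ = 2 * K₀ := (two_mul K₀).symm
    calc (∑' k', a (k - k') * H k') ^ 2
        = (∑' k', (m k' ^ (-s₀)) * (m k' ^ s₀ * (a (k - k') * H k'))) ^ 2 := by
          rw [tsum_congr hsplit]
      _ ≤ ((∑' k', (m k' ^ (-s₀)) ^ (2:ℝ)) ^ (1/2:ℝ) *
            (∑' k', (m k' ^ s₀ * (a (k - k') * H k')) ^ (2:ℝ)) ^ (1/2:ℝ)) ^ 2 :=
          pow_le_pow_left' hcs 2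
      _ = (∑' k', (m k' ^ (-s₀)) ^ (2:ℝ)) *
            (∑' k', (m k' ^ s₀ * (a (k - k') * H k')) ^ (2:ℝ)) := by
          rw [mul_pow, Tame.sq_rpow_half, Tame.sq_rpow_half]
      _ ≤ (2 * K₀) * ∑' k', m k' ^ (2*s₀) * (a (k - k') ^ 2 * H k' ^ 2) := by
          rw [tsum_congr hg2]
          exact mul_le_mul_left hsum_f _
  -- finiteness of T k
  have hHb : ∀ k', H k' ^ 2 ≤ N s := by
    intro k'
    calc H k' ^ 2 = 1 * H k' ^ 2 := (one_mul _).symm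
      _ ≤ Tame.W k' ^ (2*s) * H k' ^ 2 := by
          apply mul_le_mul_left
          calc (1:ℝ≥0∞) = 1 ^ (2*s) := (ENNReal.one_rpow _).symm
            _ ≤ Tame.W k' ^ (2*s) := ENNReal.rpow_le_rpow (Tame.one_le_W k') (by linarith)
      _ ≤ N s := ENNReal.le_tsum k'
  have hULe : ∀ k : Fin b → ℤ,
      (∑' k', (min (Tame.W (k - k')) (Tame.W k')) ^ (2*s₀) *
        (a (k - k') ^ 2 * H k' ^ 2)) ≤ D s₀ * N s := by
    intro k
    calc (∑' k', (min (Tame.W (k - k')) (Tame.W k')) ^ (2*s₀) *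
          (a (k - k') ^ 2 * H k' ^ 2))
        ≤ ∑' k', (Tame.W (k - k') ^ (2*s₀) * a (k - k') ^ 2) * N s := by
          apply ENNReal.tsum_le_tsum
          intro k'
          calc (min (Tame.W (k - k')) (Tame.W k')) ^ (2*s₀) *
                (a (k - k') ^ 2 * H k' ^ 2)
              ≤ Tame.W (k - k') ^ (2*s₀) * (a (k - k') ^ 2 * H k' ^ 2) :=
                mul_le_mul_left
                  (ENNReal.rpow_le_rpow (min_le_left _ _) (by linarith)) _
            _ = (Tame.W (k - k') ^ (2*s₀) * a (k - k') ^ 2) * H k' ^ 2 := by ring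
            _ ≤ (Tame.W (k - k') ^ (2*s₀) * a (k - k') ^ 2) * N s :=
                mul_le_mul_right (hHb k') _
      _ = (∑' k', Tame.W (k - k') ^ (2*s₀) * a (k - k') ^ 2) * N s :=
          ENNReal.tsum_mul_right
      _ = D s₀ * N s := by
          congr 1
          simp only [hD]
          rw [← (Equiv.subLeft k).tsum_eq (fun d => Tame.W d ^ (2*s₀) * a d ^ 2)]
          exact tsum_congr fun x => by simp [Equiv.subLeft]
  have hT_lt_top : ∀ k : Fin b → ℤ, (∑' k', a (k - k') * H k') < ⊤ := by
    intro k
    have h1 : (∑' k', a (k - k') * H k') ^ 2 ≤ (2 * K₀) * (D s₀ * N s) :=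
      le_trans (hCS k) (mul_le_mul_right (hULe k) _)
    have h2 : (2 * K₀) * (D s₀ * N s) < ⊤ := by
      apply ENNReal.mul_lt_top
      · exact ENNReal.mul_lt_top (by norm_num) hK₀
      · exact ENNReal.mul_lt_top (lt_of_le_of_lt hDmono hDs) hNs
    have h3 : (∑' k', a (k - k') * H k') ^ 2 < ⊤ := lt_of_le_of_lt h1 h2
    by_contra hc
    push_neg at hc
    rw [top_le_iff.mp hc, pow_two, ENNReal.top_mul_top] at h3
    exact lt_irrefl _ h3
  -- summability in ℝ≥0 and ℝ
  have hsum_nn : ∀ k : Fin b → ℤ, Summable fun k' => ‖A k k' * h k'‖₊ := by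
    intro k
    rw [← ENNReal.tsum_coe_ne_top_iff_summable]
    have hb1 : (∑' k', (‖A k k' * h k'‖₊ : ℝ≥0∞)) ≤ ∑' k', a (k - k') * H k' := by
      apply ENNReal.tsum_le_tsum
      intro k'
      calc (‖A k k' * h k'‖₊ : ℝ≥0∞) = (‖A k k'‖₊ : ℝ≥0∞) * (‖h k'‖₊ : ℝ≥0∞) := by
            rw [nnnorm_mul, ENNReal.coe_mul]
        _ ≤ a (k - k') * H k' := mul_le_mul_left (hF1 k k') _
    exact (lt_of_le_of_lt hb1 (hT_lt_top k)).ne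
  have hsummable : ∀ k : Fin b → ℤ, Summable fun k' : Fin b → ℤ => ‖A k k' * h k'‖ := by
    intro k
    have := NNReal.summable_coe.mpr (hsum_nn k)
    simpa [coe_nnnorm] using this
  refine ⟨hsummable, ?_⟩
  -- pointwise bound on the norm of the sum
  have hnorm : ∀ k : Fin b → ℤ, (‖∑' k', A k k' * h k'‖₊ : ℝ≥0∞) ≤
      ∑' k', a (k - k') * H k' := by
    intro k
    calc (‖∑' k', A k k' * h k'‖₊ : ℝ≥0∞)
        ≤ ((∑' k', ‖A k k' * h k'‖₊ : ℝ≥0) : ℝ≥0∞) :=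
          ENNReal.coe_le_coe.mpr (nnnorm_tsum_le (hsum_nn k))
      _ = ∑' k', ((‖A k k' * h k'‖₊ : ℝ≥0) : ℝ≥0∞) := ENNReal.coe_tsum (hsum_nn k)
      _ ≤ ∑' k', a (k - k') * H k' := by
          apply ENNReal.tsum_le_tsum
          intro k'
          calc ((‖A k k' * h k'‖₊ : ℝ≥0) : ℝ≥0∞)
              = (‖A k k'‖₊ : ℝ≥0∞) * (‖h k'‖₊ : ℝ≥0∞) := by
                rw [nnnorm_mul, ENNReal.coe_mul]
            _ ≤ a (k - k') * H k' := mul_le_mul_left (hF1 k k') _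
  -- main double-sum estimate
  have hmain : ∑' k, Tame.W k ^ (2*s) * (∑' k', a (k - k') * H k') ^ 2 ≤
      (2 * K₀ * ENNReal.ofReal (4 ^ s)) * (D s * N s₀ + D s₀ * N s) := by
    have mul_tsum : ∀ (x c : ℝ≥0∞) (f : (Fin b → ℤ) → ℝ≥0∞),
        x * (c * ∑' i, f i) = c * ∑' i, x * f i := by
      intro x c f
      rw [ENNReal.tsum_mul_left]
      ring
    have step1 : ∀ k : Fin b → ℤ, Tame.W k ^ (2*s) * (∑' k', a (k - k') * H k') ^ 2 ≤
        (2 * K₀ * ENNReal.ofReal (4 ^ s)) *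
          ∑' k', ((Tame.W (k - k') ^ (2*s) * a (k - k') ^ 2) * (Tame.W k' ^ (2*s₀) * H k' ^ 2) +
            (Tame.W (k - k') ^ (2*s₀) * a (k - k') ^ 2) * (Tame.W k' ^ (2*s) * H k' ^ 2)) := by
      intro k
      calc Tame.W k ^ (2*s) * (∑' k', a (k - k') * H k') ^ 2
          ≤ Tame.W k ^ (2*s) * ((2 * K₀) * ∑' k',
              (min (Tame.W (k - k')) (Tame.W k')) ^ (2*s₀) *
                (a (k - k') ^ 2 * H k' ^ 2)) := mul_le_mul_right (hCS k) _
        _ = (2 * K₀) * ∑' k', Tame.W k ^ (2*s) *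
              ((min (Tame.W (k - k')) (Tame.W k')) ^ (2*s₀) *
                (a (k - k') ^ 2 * H k' ^ 2)) := mul_tsum _ _ _
        _ ≤ (2 * K₀) * ∑' k', ENNReal.ofReal (4 ^ s) *
              ((Tame.W (k - k') ^ (2*s) * Tame.W k' ^ (2*s₀) +
                Tame.W (k - k') ^ (2*s₀) * Tame.W k' ^ (2*s)) *
                (a (k - k') ^ 2 * H k' ^ 2)) := by
            apply mul_le_mul_right
            apply ENNReal.tsum_le_tsum
            intro k'
            have htri : wt k ≤ wt (k - k') + wt k' := by
              have := Tame.wt_triangle (k - k') k'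
              simpa [sub_add_cancel] using this
            refine le_trans (le_of_eq (mul_assoc _ _ _).symm) ?_
            refine le_trans
              (mul_le_mul_left (Tame.W_key hs₀pos hs (k - k') k' k htri) _) ?_
            exact le_of_eq (by ring)
        _ = (2 * K₀ * ENNReal.ofReal (4 ^ s)) *
              ∑' k', ((Tame.W (k - k') ^ (2*s) * a (k - k') ^ 2) *
                  (Tame.W k' ^ (2*s₀) * H k' ^ 2) +
                (Tame.W (k - k') ^ (2*s₀) * a (k - k') ^ 2) *
                  (Tame.W k' ^ (2*s) * H k' ^ 2)) := by
            rw [ENNReal.tsum_mul_left, ← mul_assoc]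
            congr 1
            exact tsum_congr fun k' => by ring
    calc ∑' k, Tame.W k ^ (2*s) * (∑' k', a (k - k') * H k') ^ 2
        ≤ ∑' k, (2 * K₀ * ENNReal.ofReal (4 ^ s)) *
            ∑' k', ((Tame.W (k - k') ^ (2*s) * a (k - k') ^ 2) *
                (Tame.W k' ^ (2*s₀) * H k' ^ 2) +
              (Tame.W (k - k') ^ (2*s₀) * a (k - k') ^ 2) *
                (Tame.W k' ^ (2*s) * H k' ^ 2)) := ENNReal.tsum_le_tsum step1
      _ = (2 * K₀ * ENNReal.ofReal (4 ^ s)) *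
            ∑' k, ∑' k', ((Tame.W (k - k') ^ (2*s) * a (k - k') ^ 2) *
                (Tame.W k' ^ (2*s₀) * H k' ^ 2) +
              (Tame.W (k - k') ^ (2*s₀) * a (k - k') ^ 2) *
                (Tame.W k' ^ (2*s) * H k' ^ 2)) := ENNReal.tsum_mul_left
      _ = (2 * K₀ * ENNReal.ofReal (4 ^ s)) * (D s * N s₀ + D s₀ * N s) := by
          congr 1
          have fub : ∀ t t' : ℝ,
              ∑' (k : Fin b → ℤ) (k' : Fin b → ℤ),
                (Tame.W (k - k') ^ (2*t) * a (k - k') ^ 2) *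
                  (Tame.W k' ^ (2*t') * H k' ^ 2) = D t * N t' := by
            intro t t'
            rw [ENNReal.tsum_comm]
            calc ∑' (k' : Fin b → ℤ) (k : Fin b → ℤ),
                  (Tame.W (k - k') ^ (2*t) * a (k - k') ^ 2) *
                    (Tame.W k' ^ (2*t') * H k' ^ 2)
                = ∑' (k' : Fin b → ℤ),
                    (∑' (k : Fin b → ℤ), Tame.W (k - k') ^ (2*t) * a (k - k') ^ 2) *
                      (Tame.W k' ^ (2*t') * H k' ^ 2) :=
                  tsum_congr fun k' => ENNReal.tsum_mul_right
              _ = ∑' (k' : Fin b → ℤ), D t * (Tame.W k' ^ (2*t') * H k' ^ 2) := by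
                  apply tsum_congr
                  intro k'
                  congr 1
                  simp only [hD]
                  rw [← (Equiv.subRight k').tsum_eq (fun d => Tame.W d ^ (2*t) * a d ^ 2)]
                  exact tsum_congr fun x => by simp [Equiv.subRight]
              _ = D t * N t' := ENNReal.tsum_mul_left
          calc ∑' (k : Fin b → ℤ) (k' : Fin b → ℤ),
                ((Tame.W (k - k') ^ (2*s) * a (k - k') ^ 2) *
                    (Tame.W k' ^ (2*s₀) * H k' ^ 2) +
                  (Tame.W (k - k') ^ (2*s₀) * a (k - k') ^ 2) *
                    (Tame.W k' ^ (2*s) * H k' ^ 2))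
              = (∑' (k : Fin b → ℤ) (k' : Fin b → ℤ),
                  (Tame.W (k - k') ^ (2*s) * a (k - k') ^ 2) *
                    (Tame.W k' ^ (2*s₀) * H k' ^ 2)) +
                ∑' (k : Fin b → ℤ) (k' : Fin b → ℤ),
                  (Tame.W (k - k') ^ (2*s₀) * a (k - k') ^ 2) *
                    (Tame.W k' ^ (2*s) * H k' ^ 2) := by
                rw [← ENNReal.tsum_add]
                exact tsum_congr fun k => ENNReal.tsum_add
            _ = D s * N s₀ + D s₀ * N s := by rw [fub s s₀, fub s₀ s]
  -- conclusion
  have hfinal : sobNorm (fun k => ∑' k' : Fin b → ℤ, A k k' * h k') s ≤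
      E * (decayNorm A s * sobNorm h s₀ + decayNorm A s₀ * sobNorm h s) := by
    calc sobNorm (fun k => ∑' k' : Fin b → ℤ, A k k' * h k') s
        = (∑' k, Tame.W k ^ (2*s) * (‖∑' k', A k k' * h k'‖₊ : ℝ≥0∞) ^ 2) ^ (1/2:ℝ) := by
          rw [sobNorm]
          congr 1
          exact tsum_congr fun k => by rw [Tame.ofReal_wt_rpow]
      _ ≤ (∑' k, Tame.W k ^ (2*s) * (∑' k', a (k - k') * H k') ^ 2) ^ (1/2:ℝ) := by
          apply ENNReal.rpow_le_rpow _ (by norm_num)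
          apply ENNReal.tsum_le_tsum
          intro k
          exact mul_le_mul_right (pow_le_pow_left' (hnorm k) 2) _
      _ ≤ ((2 * K₀ * ENNReal.ofReal (4 ^ s)) * (D s * N s₀ + D s₀ * N s)) ^ (1/2:ℝ) :=
          ENNReal.rpow_le_rpow hmain (by norm_num)
      _ = E * ((D s * N s₀ + D s₀ * N s)) ^ (1/2:ℝ) := by
          rw [ENNReal.mul_rpow_of_nonneg _ _ (by norm_num : (0:ℝ) ≤ 1/2)]
      _ ≤ E * ((D s * N s₀) ^ (1/2:ℝ) + (D s₀ * N s) ^ (1/2:ℝ)) :=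
          mul_le_mul_right (ENNReal.rpow_add_le_add_rpow _ _ (by norm_num) (by norm_num)) _
      _ = E * (decayNorm A s * sobNorm h s₀ + decayNorm A s₀ * sobNorm h s) := by
          rw [ENNReal.mul_rpow_of_nonneg _ _ (by norm_num : (0:ℝ) ≤ 1/2),
            ENNReal.mul_rpow_of_nonneg _ _ (by norm_num : (0:ℝ) ≤ 1/2),
            hDrep, hDrep, hNrep, hNrep]
  calc sobNorm (fun k => ∑' k' : Fin b → ℤ, A k k' * h k') s
      ≤ E * (decayNorm A s * sobNorm h s₀ + decayNorm A s₀ * sobNorm h s) := hfinal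
    _ = E * (decayNorm A s₀ * sobNorm h s + decayNorm A s * sobNorm h s₀) := by
        rw [add_comm]
    _ ≤ ENNReal.ofReal (E.toReal + 1) *
          (decayNorm A s₀ * sobNorm h s + decayNorm A s * sobNorm h s₀) := by
        apply mul_le_mul_left
        calc E = ENNReal.ofReal E.toReal := (ENNReal.ofReal_toReal hEtop).symm
          _ ≤ ENNReal.ofReal (E.toReal + 1) := ENNReal.ofReal_le_ofReal (by linarith)
end

section
/- Let b ≥ 1 be an integer and s ≥ s₀ > b/2. There exist constants C(s) ≥ C(s₀) ≥ 1 such that for every matrix A on ℤᵇ with |A|_s < ∞ and every integer m ≥ 1, the m-th power Aᵐ (with matrix product (AB)_k^{k'} := Σ_j A_k^j B_j^{k'}, all sums absolutely convergent) satisfies |Aᵐ|_{s₀} ≤ C(s₀)^{m−1} |A|_{s₀}ᵐ and |Aᵐ|_s ≤ m (C(s₀)|A|_{s₀})^{m−1} C(s) |A|_s. -/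
open scoped ENNReal

/-- Iterated matrix product `Aᵐ`, with `A⁰ = Id` and
`(A^{m+1})_k^{k'} := Σ_j (Aᵐ)_k^j A_j^{k'}`. -/
noncomputable def matPow {b : ℕ} (A : (Fin b → ℤ) → (Fin b → ℤ) → ℂ) :
    ℕ → (Fin b → ℤ) → (Fin b → ℤ) → ℂ
  | 0 => fun k k' => if k = k' then 1 else 0
  | m + 1 => fun k k' => ∑' j : Fin b → ℤ, matPow A m k j * A j k'

namespace Stmt6Aux

variable {b : ℕ}

lemma one_le_wt (h : Fin b → ℤ) : 1 ≤ wt h := le_max_left _ _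

lemma wt_nonneg (h : Fin b → ℤ) : 0 ≤ wt h := zero_le_one.trans (one_le_wt h)

lemma absIdx_triangle (x y : Fin b → ℤ) : absIdx (x + y) ≤ absIdx x + absIdx y := by
  refine Finset.sup_le fun k _ => ?_
  calc ((x + y) k).natAbs = (x k + y k).natAbs := by simp
    _ ≤ (x k).natAbs + (y k).natAbs := Int.natAbs_add_le _ _
    _ ≤ absIdx x + absIdx y :=
      Nat.add_le_add (Finset.le_sup (f := fun k => (x k).natAbs) (Finset.mem_univ k))
        (Finset.le_sup (f := fun k => (y k).natAbs) (Finset.mem_univ k))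

lemma wt_triangle (h h' : Fin b → ℤ) : wt h ≤ wt h' + wt (h - h') := by
  have h1 : absIdx h ≤ absIdx h' + absIdx (h - h') := by
    simpa using absIdx_triangle h' (h - h')
  unfold wt
  have h2 : (absIdx h : ℝ) ≤ (absIdx h' : ℝ) + (absIdx (h - h') : ℝ) := by exact_mod_cast h1
  refine max_le ?_ ?_
  · have : (1:ℝ) ≤ max 1 (absIdx h' : ℝ) := le_max_left _ _
    nlinarith [le_max_left (1:ℝ) ((absIdx (h - h') : ℝ)), le_max_right (1:ℝ) ((absIdx (h - h') : ℝ))]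
  · exact h2.trans (add_le_add (le_max_right _ _) (le_max_right _ _))

/-- weight function in `ℝ≥0∞`. -/
noncomputable def Wf (s : ℝ) (h : Fin b → ℤ) : ℝ≥0∞ := ENNReal.ofReal (wt h ^ s)

lemma Wf_ne_zero {s : ℝ} (h : Fin b → ℤ) : Wf s h ≠ 0 := by
  simp only [Wf, ne_eq, ENNReal.ofReal_eq_zero, not_le]
  exact Real.rpow_pos_of_pos (lt_of_lt_of_le zero_lt_one (one_le_wt h)) s

lemma Wf_ne_top {s : ℝ} (h : Fin b → ℤ) : Wf s h ≠ ⊤ := ENNReal.ofReal_ne_top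

lemma one_le_Wf {s : ℝ} (hs : 0 ≤ s) (h : Fin b → ℤ) : 1 ≤ Wf s h := by
  rw [Wf, ← ENNReal.ofReal_one]
  exact ENNReal.ofReal_le_ofReal (Real.one_le_rpow (one_le_wt h) hs)

lemma Wf_sq (s : ℝ) (h : Fin b → ℤ) : Wf s h ^ 2 = ENNReal.ofReal (wt h ^ (2 * s)) := by
  rw [Wf, ← ENNReal.ofReal_pow (Real.rpow_nonneg (wt_nonneg h) s)]
  congr 1
  rw [← Real.rpow_natCast (wt h ^ s) 2, ← Real.rpow_mul (wt_nonneg h)]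
  norm_num [mul_comm]

lemma Wf_mono {s₀ s : ℝ} (hs₀ : 0 ≤ s₀) (hs : s₀ ≤ s) (h : Fin b → ℤ) : Wf s₀ h ≤ Wf s h :=
  ENNReal.ofReal_le_ofReal (Real.rpow_le_rpow_of_exponent_le (one_le_wt h) hs)

/-- `ℓ²` norm. -/
noncomputable def l2 (u : (Fin b → ℤ) → ℝ≥0∞) : ℝ≥0∞ := (∑' h, u h ^ 2) ^ (1/2 : ℝ)

/-- weighted norm. -/
noncomputable def Ns (s : ℝ) (u : (Fin b → ℤ) → ℝ≥0∞) : ℝ≥0∞ := l2 fun h => Wf s h * u h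

/-- convolution. -/
noncomputable def conv (u v : (Fin b → ℤ) → ℝ≥0∞) (h : Fin b → ℤ) : ℝ≥0∞ :=
  ∑' h', u h' * v (h - h')

lemma l2_mono {u v : (Fin b → ℤ) → ℝ≥0∞} (huv : ∀ h, u h ≤ v h) : l2 u ≤ l2 v :=
  ENNReal.rpow_le_rpow (ENNReal.tsum_le_tsum fun h => pow_le_pow_left' (huv h) 2) (by norm_num)

lemma Ns_mono (s : ℝ) {u v : (Fin b → ℤ) → ℝ≥0∞} (huv : ∀ h, u h ≤ v h) : Ns s u ≤ Ns s v :=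
  l2_mono fun h => mul_le_mul_right (huv h) _

lemma Ns_mono_s {s₀ s : ℝ} (hs₀ : 0 ≤ s₀) (hs : s₀ ≤ s) (u : (Fin b → ℤ) → ℝ≥0∞) :
    Ns s₀ u ≤ Ns s u :=
  l2_mono fun h => mul_le_mul_left (Wf_mono hs₀ hs h) _

lemma sq_rpow_half (x : ℝ≥0∞) : (x ^ 2) ^ (1/2 : ℝ) = x := by
  rw [← ENNReal.rpow_natCast x 2, ← ENNReal.rpow_mul]
  norm_num

lemma rpow_half_sq (x : ℝ≥0∞) : (x ^ (1/2 : ℝ)) ^ 2 = x := by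
  rw [← ENNReal.rpow_natCast _ 2, ← ENNReal.rpow_mul]
  norm_num

lemma l2_smul (c : ℝ≥0∞) (u : (Fin b → ℤ) → ℝ≥0∞) : l2 (fun h => c * u h) = c * l2 u := by
  unfold l2
  have e : ∑' h : Fin b → ℤ, (c * u h) ^ 2 = c ^ 2 * ∑' h, u h ^ 2 := by
    rw [← ENNReal.tsum_mul_left]
    exact tsum_congr fun h => mul_pow _ _ _
  rw [e, ENNReal.mul_rpow_of_nonneg _ _ (by norm_num : (0:ℝ) ≤ 1/2), sq_rpow_half]

/-- Cauchy–Schwarz. -/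
lemma tsum_mul_le_l2 (u v : (Fin b → ℤ) → ℝ≥0∞) : ∑' h, u h * v h ≤ l2 u * l2 v := by
  rw [ENNReal.tsum_eq_iSup_sum]
  refine iSup_le fun F => ?_
  have h2 : Real.HolderConjugate 2 2 := Real.HolderConjugate.two_two
  refine le_trans (ENNReal.inner_le_Lp_mul_Lq F u v h2) ?_
  unfold l2
  have e : ∀ w : (Fin b → ℤ) → ℝ≥0∞, (∑ i ∈ F, w i ^ (2:ℝ)) ≤ ∑' h, w h ^ 2 := by
    intro w
    calc (∑ i ∈ F, w i ^ (2:ℝ)) = ∑ i ∈ F, w i ^ 2 := by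
          refine Finset.sum_congr rfl fun i _ => ?_
          rw [← ENNReal.rpow_natCast (w i) 2]; norm_num
      _ ≤ ∑' h, w h ^ 2 := ENNReal.sum_le_tsum F
  exact mul_le_mul' (ENNReal.rpow_le_rpow (e u) (by norm_num))
    (ENNReal.rpow_le_rpow (e v) (by norm_num))

lemma half_mul_half (x : ℝ≥0∞) : x ^ (1/2:ℝ) * x ^ (1/2:ℝ) = x := by
  rw [← ENNReal.rpow_add_of_nonneg _ _ (by norm_num) (by norm_num)]
  norm_num

lemma conv_comm (u v : (Fin b → ℤ) → ℝ≥0∞) (h : Fin b → ℤ) : conv u v h = conv v u h := by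
  unfold conv
  calc ∑' h', u h' * v (h - h')
      = ∑' h'', u (h - h'') * v (h - (h - h'')) := ((Equiv.subLeft h).tsum_eq
        fun h' => u h' * v (h - h')).symm
    _ = ∑' h'', v h'' * u (h - h'') := tsum_congr fun h'' => by rw [sub_sub_cancel, mul_comm]

/-- Young's inequality `‖u ⋆ v‖₂ ≤ ‖u‖₂ ‖v‖₁`. -/
lemma l2_conv_le (u v : (Fin b → ℤ) → ℝ≥0∞) : l2 (conv u v) ≤ l2 u * ∑' h, v h := by
  set Q : ℝ≥0∞ := ∑' h, v h with hQ
  have key : ∀ h, conv u v h ^ 2 ≤ (∑' h', u h' ^ 2 * v (h - h')) * Q := by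
    intro h
    have cs : conv u v h ≤ (∑' h', (u h' * v (h - h') ^ (1/2:ℝ)) ^ 2) ^ (1/2:ℝ) *
        (∑' h', (v (h - h') ^ (1/2:ℝ)) ^ 2) ^ (1/2:ℝ) := by
      refine le_trans (le_of_eq (tsum_congr fun h' => ?_))
        (tsum_mul_le_l2 (fun h' => u h' * v (h - h') ^ (1/2:ℝ))
          (fun h' => v (h - h') ^ (1/2:ℝ)))
      rw [mul_assoc, half_mul_half]
    have e1 : ∑' h', (u h' * v (h - h') ^ (1/2:ℝ)) ^ 2 = ∑' h', u h' ^ 2 * v (h - h') :=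
      tsum_congr fun h' => by rw [mul_pow, rpow_half_sq]
    have e2 : ∑' h', (v (h - h') ^ (1/2:ℝ)) ^ 2 = Q := by
      rw [hQ, ← (Equiv.subLeft h).tsum_eq v]
      exact tsum_congr fun h' => by rw [rpow_half_sq]; simp [Equiv.subLeft]
    rw [e1, e2] at cs
    calc conv u v h ^ 2 ≤ ((∑' h', u h' ^ 2 * v (h - h')) ^ (1/2:ℝ) * Q ^ (1/2:ℝ)) ^ 2 :=
          pow_le_pow_left' cs 2
      _ = (∑' h', u h' ^ 2 * v (h - h')) * Q := by rw [mul_pow, rpow_half_sq, rpow_half_sq]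
  have sum_le : ∑' h, conv u v h ^ 2 ≤ (∑' h', u h' ^ 2) * Q ^ 2 := by
    calc ∑' h, conv u v h ^ 2 ≤ ∑' h, (∑' h', u h' ^ 2 * v (h - h')) * Q :=
          ENNReal.tsum_le_tsum key
      _ = (∑' h, ∑' h', u h' ^ 2 * v (h - h')) * Q := ENNReal.tsum_mul_right
      _ = (∑' h', ∑' h, u h' ^ 2 * v (h - h')) * Q := by rw [ENNReal.tsum_comm]
      _ = ((∑' h', u h' ^ 2) * Q) * Q := by
          congr 1
          calc ∑' h', ∑' h, u h' ^ 2 * v (h - h')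
              = ∑' h', u h' ^ 2 * ∑' h, v (h - h') := tsum_congr fun h' => ENNReal.tsum_mul_left
            _ = ∑' h', u h' ^ 2 * Q := tsum_congr fun h' => by
                rw [hQ, ← (Equiv.subRight h').tsum_eq v]
                simp [Equiv.subRight]
            _ = (∑' h', u h' ^ 2) * Q := ENNReal.tsum_mul_right
      _ = (∑' h', u h' ^ 2) * Q ^ 2 := by ring
  calc l2 (conv u v) ≤ ((∑' h', u h' ^ 2) * Q ^ 2) ^ (1/2:ℝ) :=
        ENNReal.rpow_le_rpow sum_le (by norm_num)
    _ = l2 u * Q := by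
        rw [ENNReal.mul_rpow_of_nonneg _ _ (by norm_num : (0:ℝ) ≤ 1/2), sq_rpow_half]; rfl

/-- `S^{1/2}` where `S = Σ ⟨h⟩^{-2s₀}`. -/
noncomputable def S12 (b : ℕ) (s₀ : ℝ) : ℝ≥0∞ :=
  (∑' h : Fin b → ℤ, ((Wf s₀ h)⁻¹) ^ 2) ^ (1/2:ℝ)

/-- `ℓ¹`-norm bounded by the `s₀` norm. -/
lemma tsum_le_S12_mul_Ns (s₀ : ℝ) (v : (Fin b → ℤ) → ℝ≥0∞) :
    ∑' h, v h ≤ S12 b s₀ * Ns s₀ v := by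
  have e : ∀ h, v h = (Wf s₀ h)⁻¹ * (Wf s₀ h * v h) := fun h => by
    rw [← mul_assoc, ENNReal.inv_mul_cancel (Wf_ne_zero h) (Wf_ne_top h), one_mul]
  calc ∑' h, v h = ∑' h, (Wf s₀ h)⁻¹ * (Wf s₀ h * v h) := tsum_congr e
    _ ≤ l2 (fun h => (Wf s₀ h)⁻¹) * l2 (fun h => Wf s₀ h * v h) := tsum_mul_le_l2 _ _
    _ = S12 b s₀ * Ns s₀ v := rfl

lemma sq_add_le (x y : ℝ≥0∞) : (x + y) ^ 2 ≤ 4 * (x ^ 2 + y ^ 2) := by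
  have h1 : x + y ≤ 2 * (x ⊔ y) := by
    rw [two_mul]; exact add_le_add le_sup_left le_sup_right
  have h2 : (x ⊔ y) ^ 2 ≤ x ^ 2 + y ^ 2 := by
    rcases le_total x y with h | h
    · rw [sup_eq_right.2 h]; exact le_add_self
    · rw [sup_eq_left.2 h]; exact le_self_add
  calc (x + y) ^ 2 ≤ (2 * (x ⊔ y)) ^ 2 := pow_le_pow_left' h1 2
    _ = 4 * (x ⊔ y) ^ 2 := by rw [mul_pow]; norm_num
    _ ≤ 4 * (x ^ 2 + y ^ 2) := mul_le_mul_right h2 4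

lemma four_rpow_half : (4 : ℝ≥0∞) ^ (1/2:ℝ) = 2 := by
  have : (4 : ℝ≥0∞) = 2 ^ 2 := by norm_num
  rw [this, sq_rpow_half]

lemma l2_add_le (u v : (Fin b → ℤ) → ℝ≥0∞) :
    l2 (fun h => u h + v h) ≤ 2 * l2 u + 2 * l2 v := by
  calc l2 (fun h => u h + v h)
      ≤ (∑' h, 4 * (u h ^ 2 + v h ^ 2)) ^ (1/2:ℝ) :=
        ENNReal.rpow_le_rpow (ENNReal.tsum_le_tsum fun h => sq_add_le _ _) (by norm_num)
    _ = (4 * (∑' h, u h ^ 2) + 4 * (∑' h, v h ^ 2)) ^ (1/2:ℝ) := by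
        rw [ENNReal.tsum_mul_left, ENNReal.tsum_add, mul_add]
    _ ≤ (4 * ∑' h, u h ^ 2) ^ (1/2:ℝ) + (4 * ∑' h, v h ^ 2) ^ (1/2:ℝ) :=
        ENNReal.rpow_add_le_add_rpow _ _ (by norm_num) (by norm_num)
    _ = 2 * l2 u + 2 * l2 v := by
        rw [ENNReal.mul_rpow_of_nonneg _ _ (by norm_num : (0:ℝ) ≤ 1/2),
          ENNReal.mul_rpow_of_nonneg _ _ (by norm_num : (0:ℝ) ≤ 1/2), four_rpow_half]
        rfl

lemma Wf_peetre {s : ℝ} (hs : 0 ≤ s) (h h' : Fin b → ℤ) :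
    Wf s h ≤ ENNReal.ofReal (2 ^ s) * (Wf s h' + Wf s (h - h')) := by
  have hr : wt h ^ s ≤ 2 ^ s * (wt h' ^ s + wt (h - h') ^ s) := by
    have t1 : wt h ≤ 2 * max (wt h') (wt (h - h')) := by
      refine (wt_triangle h h').trans ?_
      rw [two_mul]
      exact add_le_add (le_max_left _ _) (le_max_right _ _)
    calc wt h ^ s ≤ (2 * max (wt h') (wt (h - h'))) ^ s :=
          Real.rpow_le_rpow (wt_nonneg h) t1 hs
      _ = 2 ^ s * max (wt h') (wt (h - h')) ^ s := by
          rw [Real.mul_rpow (by norm_num) (le_trans (wt_nonneg h') (le_max_left _ _))]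
      _ ≤ 2 ^ s * (wt h' ^ s + wt (h - h') ^ s) := by
          refine mul_le_mul_of_nonneg_left ?_ (by positivity)
          rcases le_total (wt h') (wt (h - h')) with hh | hh
          · rw [max_eq_right hh]
            exact le_add_of_nonneg_left (Real.rpow_nonneg (wt_nonneg _) _)
          · rw [max_eq_left hh]
            exact le_add_of_nonneg_right (Real.rpow_nonneg (wt_nonneg _) _)
  calc Wf s h ≤ ENNReal.ofReal (2 ^ s * (wt h' ^ s + wt (h - h') ^ s)) :=
        ENNReal.ofReal_le_ofReal hr
    _ = ENNReal.ofReal (2 ^ s) * (Wf s h' + Wf s (h - h')) := by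
        rw [ENNReal.ofReal_mul (by positivity),
          ENNReal.ofReal_add (Real.rpow_nonneg (wt_nonneg _) _)
            (Real.rpow_nonneg (wt_nonneg _) _)]
        rfl

lemma Wf_conv_le {s : ℝ} (hs : 0 ≤ s) (u v : (Fin b → ℤ) → ℝ≥0∞) (h : Fin b → ℤ) :
    Wf s h * conv u v h ≤ ENNReal.ofReal (2 ^ s) *
      (conv (fun h' => Wf s h' * u h') v h + conv u (fun h' => Wf s h' * v h') h) := by
  set E := ENNReal.ofReal (2 ^ s) with hE
  calc Wf s h * conv u v h = ∑' h', Wf s h * (u h' * v (h - h')) := ENNReal.tsum_mul_left.symm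
    _ ≤ ∑' h', (E * (Wf s h' + Wf s (h - h'))) * (u h' * v (h - h')) :=
        ENNReal.tsum_le_tsum fun h' => mul_le_mul_left (Wf_peetre hs h h') _
    _ = ∑' h', E * ((Wf s h' * u h') * v (h - h') + u h' * (Wf s (h - h') * v (h - h'))) :=
        tsum_congr fun h' => by ring
    _ = E * (conv (fun h' => Wf s h' * u h') v h + conv u (fun h' => Wf s h' * v h') h) := by
        rw [ENNReal.tsum_mul_left, ENNReal.tsum_add]
        rfl

/-- The key algebra estimate. -/
lemma Ns_conv_le {s₀ s : ℝ} (hs : 0 ≤ s) (u v : (Fin b → ℤ) → ℝ≥0∞) :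
    Ns s (conv u v) ≤ 2 * ENNReal.ofReal (2 ^ s) * S12 b s₀ *
      (Ns s u * Ns s₀ v + Ns s₀ u * Ns s v) := by
  set E := ENNReal.ofReal (2 ^ s) with hE
  have step1 : Ns s (conv u v) ≤
      E * (2 * l2 (conv (fun h' => Wf s h' * u h') v) +
           2 * l2 (conv u (fun h' => Wf s h' * v h'))) := by
    calc Ns s (conv u v)
        ≤ l2 (fun h => E * (conv (fun h' => Wf s h' * u h') v h +
            conv u (fun h' => Wf s h' * v h') h)) := l2_mono (Wf_conv_le hs u v)
      _ = E * l2 (fun h => conv (fun h' => Wf s h' * u h') v h +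
            conv u (fun h' => Wf s h' * v h') h) := l2_smul _ _
      _ ≤ E * (2 * l2 (conv (fun h' => Wf s h' * u h') v) +
           2 * l2 (conv u (fun h' => Wf s h' * v h'))) :=
          mul_le_mul_right (l2_add_le _ _) _
  have y1 : l2 (conv (fun h' => Wf s h' * u h') v) ≤ Ns s u * (S12 b s₀ * Ns s₀ v) :=
    (l2_conv_le _ _).trans (mul_le_mul_right (tsum_le_S12_mul_Ns s₀ v) _)
  have y2 : l2 (conv u (fun h' => Wf s h' * v h')) ≤ Ns s v * (S12 b s₀ * Ns s₀ u) := by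
    have ecc : conv u (fun h' => Wf s h' * v h') = conv (fun h' => Wf s h' * v h') u :=
      funext fun h => conv_comm _ _ h
    rw [ecc]
    exact (l2_conv_le _ _).trans (mul_le_mul_right (tsum_le_S12_mul_Ns s₀ u) _)
  calc Ns s (conv u v) ≤ E * (2 * (Ns s u * (S12 b s₀ * Ns s₀ v)) +
        2 * (Ns s v * (S12 b s₀ * Ns s₀ u))) :=
        step1.trans (mul_le_mul_right (add_le_add (mul_le_mul_right y1 2)
          (mul_le_mul_right y2 2)) E)
    _ = 2 * E * S12 b s₀ * (Ns s u * Ns s₀ v + Ns s₀ u * Ns s v) := by ring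

/-- one-dimensional decay factor. -/
noncomputable def g1 (q : ℝ) (n : ℤ) : ℝ≥0∞ := ENNReal.ofReal (max 1 |(n:ℝ)| ^ (-q))

lemma tsum_g1_ne_top {q : ℝ} (hq : 1 < q) : ∑' n : ℤ, g1 q n ≠ ⊤ := by
  have hsum : Summable fun n : ℤ => max 1 |(n:ℝ)| ^ (-q) := by
    have h1 : Summable fun n : ℤ => |(n:ℝ)| ^ (-q) := Real.summable_abs_int_rpow hq
    have h2 : Summable fun n : ℤ => if n = 0 then (1:ℝ) else 0 :=
      summable_of_ne_finset_zero (s := {0}) (fun n hn => by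
        simp only [Finset.mem_singleton] at hn; simp [hn])
    refine Summable.of_nonneg_of_le (fun n => Real.rpow_nonneg (le_trans zero_le_one
      (le_max_left _ _)) _) (fun n => ?_) (h1.add h2)
    by_cases hn : n = 0
    · subst hn
      have e : max (1:ℝ) |((0:ℤ):ℝ)| ^ (-q) = 1 := by norm_num
      have h0 : (0:ℝ) ≤ |((0:ℤ):ℝ)| ^ (-q) := Real.rpow_nonneg (abs_nonneg _) _
      rw [e, if_pos rfl]
      linarith
    · have h1n : (1:ℝ) ≤ |(n:ℝ)| := by
        have : (1:ℤ) ≤ |n| := Int.one_le_abs (by exact_mod_cast hn)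
        calc (1:ℝ) ≤ (|n| : ℤ) := by exact_mod_cast this
          _ = |(n:ℝ)| := by push_cast; rfl
      rw [max_eq_right h1n, if_neg hn]
      have : (0:ℝ) ≤ |(n:ℝ)| ^ (-q) := Real.rpow_nonneg (abs_nonneg _) _
      linarith
  unfold g1
  rw [← ENNReal.ofReal_tsum_of_nonneg (fun n => Real.rpow_nonneg (le_trans zero_le_one
    (le_max_left _ _)) _) hsum]
  exact ENNReal.ofReal_ne_top

lemma tsum_pi_prod (g : ℤ → ℝ≥0∞) :
    ∀ n : ℕ, (∑' h : Fin n → ℤ, ∏ i, g (h i)) = (∑' m : ℤ, g m) ^ n := by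
  intro n
  induction n with
  | zero =>
      rw [pow_zero]
      rw [tsum_eq_single (fun i => (0:ℤ)) (fun h' hh' => absurd (Subsingleton.elim _ _) hh')]
      simp
  | succ n ih =>
      calc (∑' h : Fin (n+1) → ℤ, ∏ i, g (h i))
          = ∑' p : ℤ × (Fin n → ℤ), ∏ i, g ((Fin.consEquiv fun _ => ℤ) p i) :=
            ((Fin.consEquiv fun _ => ℤ).tsum_eq fun h => ∏ i, g (h i)).symm
        _ = ∑' p : ℤ × (Fin n → ℤ), g p.1 * ∏ i, g (p.2 i) := by
            refine tsum_congr fun p => ?_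
            rw [Fin.prod_univ_succ]
            simp [Fin.consEquiv]
        _ = ∑' m : ℤ, ∑' h : Fin n → ℤ, g m * ∏ i, g (h i) := ENNReal.tsum_prod'
        _ = (∑' m : ℤ, g m) * ∑' h : Fin n → ℤ, ∏ i, g (h i) := by
            rw [← ENNReal.tsum_mul_right]
            exact tsum_congr fun m => ENNReal.tsum_mul_left
        _ = (∑' m : ℤ, g m) ^ (n + 1) := by rw [ih, pow_succ]; ring

lemma wt1_le_wt (h : Fin b → ℤ) (i : Fin b) : max 1 |((h i : ℤ):ℝ)| ≤ wt h := by
  refine max_le (one_le_wt h) ?_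
  have : (h i).natAbs ≤ absIdx h := Finset.le_sup (f := fun k => (h k).natAbs) (Finset.mem_univ i)
  calc |((h i : ℤ):ℝ)| = ((h i).natAbs : ℝ) := by
        rw [Nat.cast_natAbs]; push_cast; rfl
    _ ≤ (absIdx h : ℝ) := by exact_mod_cast this
    _ ≤ wt h := le_max_right _ _

lemma S12_lt_top (hb : 1 ≤ b) {s₀ : ℝ} (hs₀ : (b:ℝ)/2 < s₀) : S12 b s₀ < ⊤ := by
  set q : ℝ := 2 * s₀ / b with hq
  have hbpos : (0:ℝ) < b := by exact_mod_cast hb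
  have hq1 : 1 < q := by
    rw [hq, lt_div_iff₀ hbpos, one_mul]
    linarith
  have hq0 : 0 ≤ q := by linarith
  have key : ∀ h : Fin b → ℤ, ((Wf s₀ h)⁻¹) ^ 2 ≤ ∏ i, g1 q (h i) := by
    intro h
    have hwpos : (0:ℝ) < wt h ^ (2 * s₀) :=
      Real.rpow_pos_of_pos (lt_of_lt_of_le zero_lt_one (one_le_wt h)) _
    have e1 : ((Wf s₀ h)⁻¹) ^ 2 = ENNReal.ofReal ((wt h ^ (2 * s₀))⁻¹) := by
      rw [← ENNReal.inv_pow, Wf_sq, ENNReal.ofReal_inv_of_pos hwpos]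
    rw [e1]
    have real_ineq : (wt h ^ (2 * s₀))⁻¹ ≤ ∏ i, max 1 |((h i : ℤ):ℝ)| ^ (-q) := by
      have hfac : ∀ i : Fin b, (0:ℝ) < max 1 |((h i : ℤ):ℝ)| :=
        fun i => lt_of_lt_of_le zero_lt_one (le_max_left _ _)
      have hprodpos : (0:ℝ) < ∏ i, max 1 |((h i : ℤ):ℝ)| :=
        Finset.prod_pos fun i _ => hfac i
      have hPq : (∏ i, max 1 |((h i : ℤ):ℝ)|) ^ q ≤ wt h ^ (2 * s₀) := by
        have hP : (∏ i, max 1 |((h i : ℤ):ℝ)|) ≤ wt h ^ (b:ℕ) := by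
          calc (∏ i, max 1 |((h i : ℤ):ℝ)|) ≤ ∏ _i : Fin b, wt h :=
                Finset.prod_le_prod (fun i _ => (hfac i).le) (fun i _ => wt1_le_wt h i)
            _ = wt h ^ (b:ℕ) := by rw [Finset.prod_const, Finset.card_univ, Fintype.card_fin]
        calc (∏ i, max 1 |((h i : ℤ):ℝ)|) ^ q ≤ (wt h ^ (b:ℕ)) ^ q :=
              Real.rpow_le_rpow hprodpos.le hP hq0
          _ = wt h ^ (2 * s₀) := by
              rw [← Real.rpow_natCast (wt h) b, ← Real.rpow_mul (wt_nonneg h)]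
              congr 1
              rw [hq]
              field_simp
      have : (wt h ^ (2 * s₀))⁻¹ ≤ ((∏ i, max 1 |((h i : ℤ):ℝ)|) ^ q)⁻¹ :=
        inv_anti₀ (Real.rpow_pos_of_pos hprodpos q) hPq
      refine this.trans (le_of_eq ?_)
      rw [← Real.rpow_neg hprodpos.le, ← Real.finset_prod_rpow _ _ (fun i _ => (hfac i).le)]
    calc ENNReal.ofReal ((wt h ^ (2 * s₀))⁻¹)
        ≤ ENNReal.ofReal (∏ i, max 1 |((h i : ℤ):ℝ)| ^ (-q)) :=
          ENNReal.ofReal_le_ofReal real_ineq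
      _ = ∏ i, g1 q (h i) := ENNReal.ofReal_prod_of_nonneg fun i _ =>
          Real.rpow_nonneg (le_trans zero_le_one (le_max_left _ _)) _
  have hS : (∑' h : Fin b → ℤ, ((Wf s₀ h)⁻¹) ^ 2) < ⊤ := by
    calc (∑' h : Fin b → ℤ, ((Wf s₀ h)⁻¹) ^ 2) ≤ ∑' h : Fin b → ℤ, ∏ i, g1 q (h i) :=
          ENNReal.tsum_le_tsum key
      _ = (∑' m : ℤ, g1 q m) ^ b := tsum_pi_prod _ b
      _ < ⊤ := ENNReal.pow_lt_top (lt_top_iff_ne_top.2 (tsum_g1_ne_top hq1))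
  exact ENNReal.rpow_lt_top_of_nonneg (by norm_num) hS.ne

/-- decay profile of `Aᵐ`. -/
noncomputable def Tm (A : (Fin b → ℤ) → (Fin b → ℤ) → ℂ) (m : ℕ) (h : Fin b → ℤ) : ℝ≥0∞ :=
  ⨆ k, (‖matPow A m k (k - h)‖₊ : ℝ≥0∞)

lemma decayNorm_eq_Ns (B : (Fin b → ℤ) → (Fin b → ℤ) → ℂ) (s : ℝ) :
    decayNorm B s = Ns s fun h => ⨆ k, (‖B k (k - h)‖₊ : ℝ≥0∞) := by
  unfold decayNorm Ns l2
  congr 1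
  exact tsum_congr fun h => by rw [mul_pow, Wf_sq]

lemma matPow_one (A : (Fin b → ℤ) → (Fin b → ℤ) → ℂ) (k k' : Fin b → ℤ) :
    matPow A 1 k k' = A k k' := by
  show (∑' j : Fin b → ℤ, matPow A 0 k j * A j k') = A k k'
  rw [tsum_eq_single k (fun j hj => by
    show (if k = j then (1:ℂ) else 0) * A j k' = 0
    rw [if_neg (Ne.symm hj), zero_mul])]
  show (if k = k then (1:ℂ) else 0) * A k k' = A k k'
  rw [if_pos rfl, one_mul]

lemma Tm_one (A : (Fin b → ℤ) → (Fin b → ℤ) → ℂ) :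
    Tm A 1 = fun h => ⨆ k, (‖A k (k - h)‖₊ : ℝ≥0∞) := by
  funext h
  unfold Tm
  exact iSup_congr fun k => by rw [matPow_one]

lemma decayNorm_matPow (A : (Fin b → ℤ) → (Fin b → ℤ) → ℂ) (m : ℕ) (s : ℝ) :
    decayNorm (matPow A m) s = Ns s (Tm A m) :=
  decayNorm_eq_Ns _ s

lemma decayNorm_one (A : (Fin b → ℤ) → (Fin b → ℤ) → ℂ) (s : ℝ) :
    decayNorm (matPow A 1) s = decayNorm A s := by
  rw [decayNorm_matPow, Tm_one, decayNorm_eq_Ns]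

lemma enn_tsum_le (f : (Fin b → ℤ) → ℂ) :
    (‖∑' j, f j‖₊ : ℝ≥0∞) ≤ ∑' j, (‖f j‖₊ : ℝ≥0∞) := by
  by_cases hf : ∑' j, ((‖f j‖₊ : ℝ≥0∞)) = ⊤
  · rw [hf]; exact le_top
  · have hs : Summable fun j => ‖f j‖₊ := ENNReal.tsum_coe_ne_top_iff_summable.1 hf
    rw [← ENNReal.coe_tsum hs]
    exact_mod_cast nnnorm_tsum_le hs

lemma nnnorm_matPow_le (A : (Fin b → ℤ) → (Fin b → ℤ) → ℂ) (m : ℕ) (k j : Fin b → ℤ) :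
    (‖matPow A m k j‖₊ : ℝ≥0∞) ≤ Tm A m (k - j) := by
  have : k - (k - j) = j := by abel
  calc (‖matPow A m k j‖₊ : ℝ≥0∞) = ‖matPow A m k (k - (k - j))‖₊ := by rw [this]
    _ ≤ Tm A m (k - j) := le_iSup (fun κ => (‖matPow A m κ (κ - (k - j))‖₊ : ℝ≥0∞)) k

/-- the entrywise `ℓ¹` bound for the product sum. -/
lemma tsum_entry_le (A : (Fin b → ℤ) → (Fin b → ℤ) → ℂ) (m : ℕ) (k k' : Fin b → ℤ) :
    ∑' j : Fin b → ℤ, (‖matPow A m k j‖₊ : ℝ≥0∞) * (‖A j k'‖₊ : ℝ≥0∞) ≤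
      conv (Tm A m) (Tm A 1) (k - k') := by
  calc ∑' j : Fin b → ℤ, (‖matPow A m k j‖₊ : ℝ≥0∞) * (‖A j k'‖₊ : ℝ≥0∞)
      = ∑' h', (‖matPow A m k (k - h')‖₊ : ℝ≥0∞) * (‖A (k - h') k'‖₊ : ℝ≥0∞) :=
        ((Equiv.subLeft k).tsum_eq fun j =>
          (‖matPow A m k j‖₊ : ℝ≥0∞) * (‖A j k'‖₊ : ℝ≥0∞)).symm
    _ ≤ ∑' h', Tm A m h' * Tm A 1 ((k - k') - h') := by
        refine ENNReal.tsum_le_tsum fun h' => mul_le_mul' ?_ ?_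
        · have : k - (k - h') = h' := by abel
          calc (‖matPow A m k (k - h')‖₊ : ℝ≥0∞)
              ≤ Tm A m (k - (k - h')) := nnnorm_matPow_le A m k (k - h')
            _ = Tm A m h' := by rw [this]
        · calc (‖A (k - h') k'‖₊ : ℝ≥0∞)
              = ‖A (k - h') ((k - h') - ((k - k') - h'))‖₊ := by
                rw [show (k - h') - ((k - k') - h') = k' by abel]
            _ ≤ ⨆ κ, (‖A κ (κ - ((k - k') - h'))‖₊ : ℝ≥0∞) :=
                le_iSup (fun κ => (‖A κ (κ - ((k - k') - h'))‖₊ : ℝ≥0∞)) (k - h')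
            _ = Tm A 1 ((k - k') - h') := by rw [Tm_one]
    _ = conv (Tm A m) (Tm A 1) (k - k') := rfl

lemma Tm_succ_le (A : (Fin b → ℤ) → (Fin b → ℤ) → ℂ) (m : ℕ) (h : Fin b → ℤ) :
    Tm A (m + 1) h ≤ conv (Tm A m) (Tm A 1) h := by
  refine iSup_le fun k => ?_
  show (‖∑' j, matPow A m k j * A j (k - h)‖₊ : ℝ≥0∞) ≤ conv (Tm A m) (Tm A 1) h
  calc (‖∑' j, matPow A m k j * A j (k - h)‖₊ : ℝ≥0∞)
      ≤ ∑' j, (‖matPow A m k j * A j (k - h)‖₊ : ℝ≥0∞) := enn_tsum_le _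
    _ = ∑' j, (‖matPow A m k j‖₊ : ℝ≥0∞) * (‖A j (k - h)‖₊ : ℝ≥0∞) := by
        refine tsum_congr fun j => ?_
        rw [nnnorm_mul]; push_cast; ring
    _ ≤ conv (Tm A m) (Tm A 1) (k - (k - h)) := tsum_entry_le A m k (k - h)
    _ = conv (Tm A m) (Tm A 1) h := by rw [show k - (k - h) = h by abel]

lemma tsum_conv (u v : (Fin b → ℤ) → ℝ≥0∞) :
    ∑' h, conv u v h = (∑' h, u h) * ∑' h, v h := by
  unfold conv
  rw [ENNReal.tsum_comm]
  calc ∑' h', ∑' h, u h' * v (h - h') = ∑' h', u h' * ∑' h, v (h - h') :=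
        tsum_congr fun h' => ENNReal.tsum_mul_left
    _ = ∑' h', u h' * ∑' h, v h := by
        refine tsum_congr fun h' => ?_
        rw [← (Equiv.subRight h').tsum_eq v]
        rfl
    _ = (∑' h, u h) * ∑' h, v h := ENNReal.tsum_mul_right

lemma Tm_zero_le (A : (Fin b → ℤ) → (Fin b → ℤ) → ℂ) (h : Fin b → ℤ) :
    Tm A 0 h ≤ if h = 0 then 1 else 0 := by
  refine iSup_le fun k => ?_
  show (‖(if k = k - h then (1:ℂ) else 0)‖₊ : ℝ≥0∞) ≤ _
  by_cases hh : h = 0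
  · subst hh
    simp
  · rw [if_neg (fun hk => hh (sub_eq_self.mp hk.symm))]
    simp

lemma tsum_Tm_zero (A : (Fin b → ℤ) → (Fin b → ℤ) → ℂ) :
    ∑' h, Tm A 0 h ≤ 1 := by
  calc ∑' h, Tm A 0 h ≤ ∑' h : Fin b → ℤ, if h = 0 then 1 else 0 :=
        ENNReal.tsum_le_tsum (Tm_zero_le A)
    _ = 1 := by rw [tsum_eq_single 0 (fun h hh => if_neg hh)]; rw [if_pos rfl]

end Stmt6Aux

theorem stmt6 (b : ℕ) (hb : 1 ≤ b) (s₀ s : ℝ) (hs₀ : (b : ℝ) / 2 < s₀) (hs : s₀ ≤ s) :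
    ∃ C₀ C : ℝ, 1 ≤ C₀ ∧ C₀ ≤ C ∧
      ∀ A : (Fin b → ℤ) → (Fin b → ℤ) → ℂ, decayNorm A s < ⊤ →
        (∀ (m : ℕ) (k k' : Fin b → ℤ), Summable fun j : Fin b → ℤ => ‖matPow A m k j * A j k'‖) ∧
        ∀ m : ℕ, 1 ≤ m →
          decayNorm (matPow A m) s₀ ≤ ENNReal.ofReal C₀ ^ (m - 1) * decayNorm A s₀ ^ m ∧
          decayNorm (matPow A m) s ≤
            (m : ℝ≥0∞) * (ENNReal.ofReal C₀ * decayNorm A s₀) ^ (m - 1) *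
              ENNReal.ofReal C * decayNorm A s := by
  classical
  open Stmt6Aux in
  have hbpos : (0:ℝ) < b := by exact_mod_cast hb
  have hs0pos : (0:ℝ) < s₀ := lt_trans (by positivity) hs₀
  have hspos : (0:ℝ) < s := lt_of_lt_of_le hs0pos hs
  set S : ℝ≥0∞ := Stmt6Aux.S12 b s₀ with hSdef
  have hS : S < ⊤ := Stmt6Aux.S12_lt_top hb hs₀
  set L : ℝ≥0∞ := 2 * ENNReal.ofReal (2 ^ s) * S with hLdef
  set L₀ : ℝ≥0∞ := 2 * ENNReal.ofReal (2 ^ s₀) * S with hL0def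
  have hLne : L ≠ ⊤ := by
    refine ENNReal.mul_ne_top (ENNReal.mul_ne_top (by norm_num) ENNReal.ofReal_ne_top) hS.ne
  have hL0ne : 2 * L₀ ≠ ⊤ := by
    refine ENNReal.mul_ne_top (by norm_num)
      (ENNReal.mul_ne_top (ENNReal.mul_ne_top (by norm_num) ENNReal.ofReal_ne_top) hS.ne)
  set C₀ : ℝ := max 1 (max ((2 * L₀).toReal) L.toReal) with hC0def
  refine ⟨C₀, C₀, le_max_left _ _, le_rfl, ?_⟩
  intro A hA
  set 𝒞 : ℝ≥0∞ := ENNReal.ofReal C₀ with h𝒞def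
  have h1𝒞 : 1 ≤ 𝒞 := by
    rw [h𝒞def, ← ENNReal.ofReal_one]
    exact ENNReal.ofReal_le_ofReal (le_max_left _ _)
  have h2L₀ : 2 * L₀ ≤ 𝒞 := by
    rw [h𝒞def, ← ENNReal.ofReal_toReal hL0ne]
    exact ENNReal.ofReal_le_ofReal ((le_max_left _ _).trans (le_max_right _ _))
  have hL𝒞 : L ≤ 𝒞 := by
    rw [h𝒞def, ← ENNReal.ofReal_toReal hLne]
    exact ENNReal.ofReal_le_ofReal ((le_max_right _ _).trans (le_max_right _ _))
  set T : ℕ → (Fin b → ℤ) → ℝ≥0∞ := Stmt6Aux.Tm A with hTdef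
  set D : ℝ≥0∞ := decayNorm A s with hDdef
  set D₀ : ℝ≥0∞ := decayNorm A s₀ with hD0def
  have hN1s : Stmt6Aux.Ns s (T 1) = D := by
    rw [hTdef, ← Stmt6Aux.decayNorm_matPow, Stmt6Aux.decayNorm_one]
  have hN1s₀ : Stmt6Aux.Ns s₀ (T 1) = D₀ := by
    rw [hTdef, ← Stmt6Aux.decayNorm_matPow, Stmt6Aux.decayNorm_one]
  have hD0D : D₀ ≤ D := by
    rw [hDdef, hD0def, Stmt6Aux.decayNorm_eq_Ns, Stmt6Aux.decayNorm_eq_Ns]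
    exact Stmt6Aux.Ns_mono_s hs0pos.le hs _
  -- the inductive algebra steps
  have hstep : ∀ (σ : ℝ), 0 ≤ σ → ∀ m : ℕ,
      Stmt6Aux.Ns σ (T (m + 1)) ≤ 2 * ENNReal.ofReal (2 ^ σ) * S *
        (Stmt6Aux.Ns σ (T m) * Stmt6Aux.Ns s₀ (T 1) +
         Stmt6Aux.Ns s₀ (T m) * Stmt6Aux.Ns σ (T 1)) := by
    intro σ hσ m
    refine (Stmt6Aux.Ns_mono σ (Stmt6Aux.Tm_succ_le A m)).trans ?_
    exact Stmt6Aux.Ns_conv_le hσ _ _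
  -- ℓ¹ bounds and summability
  have hl1T1 : ∑' h, T 1 h ≤ S * D₀ := by
    rw [← hN1s₀]
    exact Stmt6Aux.tsum_le_S12_mul_Ns s₀ (T 1)
  have hD0lt : D₀ < ⊤ := lt_of_le_of_lt hD0D hA
  have hl1 : ∀ m : ℕ, ∑' h, T m h ≠ ⊤ := by
    intro m
    induction m with
    | zero => exact ne_top_of_le_ne_top (by norm_num) (Stmt6Aux.tsum_Tm_zero A)
    | succ m ih =>
        have : ∑' h, T (m+1) h ≤ (∑' h, T m h) * ∑' h, T 1 h := by
          refine le_trans (ENNReal.tsum_le_tsum (Stmt6Aux.Tm_succ_le A m)) ?_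
          rw [Stmt6Aux.tsum_conv]
        refine ne_top_of_le_ne_top ?_ this
        exact ENNReal.mul_ne_top ih
          (ne_top_of_le_ne_top (ENNReal.mul_ne_top hS.ne hD0lt.ne) hl1T1)
  have hsummable : ∀ (m : ℕ) (k k' : Fin b → ℤ),
      Summable fun j : Fin b → ℤ => ‖matPow A m k j * A j k'‖ := by
    intro m k k'
    have hent : ∑' j : Fin b → ℤ, ((‖matPow A m k j * A j k'‖₊ : ℝ≥0∞)) ≠ ⊤ := by
      have e : ∑' j : Fin b → ℤ, ((‖matPow A m k j * A j k'‖₊ : ℝ≥0∞)) =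
          ∑' j, (‖matPow A m k j‖₊ : ℝ≥0∞) * (‖A j k'‖₊ : ℝ≥0∞) := by
        refine tsum_congr fun j => ?_
        rw [nnnorm_mul]; push_cast; ring
      rw [e]
      refine ne_top_of_le_ne_top ?_ ((Stmt6Aux.tsum_entry_le A m k k').trans
        (ENNReal.le_tsum (k - k')))
      rw [Stmt6Aux.tsum_conv]
      exact ENNReal.mul_ne_top (hl1 m)
        (ne_top_of_le_ne_top (ENNReal.mul_ne_top hS.ne hD0lt.ne) hl1T1)
    have hnn : Summable fun j : Fin b → ℤ => ‖matPow A m k j * A j k'‖₊ :=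
      ENNReal.tsum_coe_ne_top_iff_summable.1 hent
    simpa using NNReal.summable_coe.2 hnn
  refine ⟨hsummable, ?_⟩
  -- now the norm bounds by induction on m ≥ 1
  have H₀ : ∀ m : ℕ, 1 ≤ m → Stmt6Aux.Ns s₀ (T m) ≤ 𝒞 ^ (m - 1) * D₀ ^ m := by
    intro m hm
    induction m, hm using Nat.le_induction with
    | base => simpa [hN1s₀] using le_rfl
    | succ m hm ih =>
        have step := hstep s₀ hs0pos.le m
        rw [hN1s₀] at step
        have e1 : 2 * ENNReal.ofReal (2 ^ s₀) * S *
            (Stmt6Aux.Ns s₀ (T m) * D₀ + Stmt6Aux.Ns s₀ (T m) * D₀) =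
            (2 * L₀) * (Stmt6Aux.Ns s₀ (T m) * D₀) := by
          rw [hL0def]; ring
        rw [e1] at step
        refine step.trans ?_
        calc (2 * L₀) * (Stmt6Aux.Ns s₀ (T m) * D₀)
            ≤ 𝒞 * ((𝒞 ^ (m - 1) * D₀ ^ m) * D₀) :=
              mul_le_mul' h2L₀ (mul_le_mul_left ih D₀)
          _ = 𝒞 ^ (m - 1 + 1) * D₀ ^ (m + 1) := by rw [pow_succ, pow_succ]; ring
          _ = 𝒞 ^ (m + 1 - 1) * D₀ ^ (m + 1) := by
              congr 2
              omega
  have Hs : ∀ m : ℕ, 1 ≤ m →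
      Stmt6Aux.Ns s (T m) ≤ (m : ℝ≥0∞) * (𝒞 * D₀) ^ (m - 1) * 𝒞 * D := by
    intro m hm
    induction m, hm using Nat.le_induction with
    | base =>
        rw [hN1s]
        have hDD : D ≤ 𝒞 * D := by
          calc D = 1 * D := (one_mul D).symm
            _ ≤ 𝒞 * D := mul_le_mul_left h1𝒞 D
        simpa using hDD
    | succ m hm ih =>
        have step := hstep s (hs0pos.le.trans hs) m
        rw [hN1s, hN1s₀] at step
        have h₀m := H₀ m hm
        refine step.trans ?_
        have e1 : 2 * ENNReal.ofReal (2 ^ s) * S *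
            (Stmt6Aux.Ns s (T m) * D₀ + Stmt6Aux.Ns s₀ (T m) * D) =
            L * (Stmt6Aux.Ns s (T m) * D₀ + Stmt6Aux.Ns s₀ (T m) * D) := by rw [hLdef]
        rw [e1]
        have hmq : ((𝒞 * D₀) ^ (m - 1)) * (𝒞 * D₀) = (𝒞 * D₀) ^ m := by
          rw [← pow_succ, Nat.sub_add_cancel hm]
        have hmp : (𝒞 ^ (m - 1) * 𝒞) * D₀ ^ m = (𝒞 * D₀) ^ m := by
          rw [← pow_succ, Nat.sub_add_cancel hm, mul_pow]
        calc L * (Stmt6Aux.Ns s (T m) * D₀ + Stmt6Aux.Ns s₀ (T m) * D)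
            ≤ 𝒞 * ((((m : ℝ≥0∞) * (𝒞 * D₀) ^ (m - 1) * 𝒞 * D) * D₀) +
                (𝒞 ^ (m - 1) * D₀ ^ m) * D) :=
              mul_le_mul' hL𝒞 (add_le_add (mul_le_mul_left ih D₀)
                (mul_le_mul_left h₀m D))
          _ = (m : ℝ≥0∞) * (((𝒞 * D₀) ^ (m - 1)) * (𝒞 * D₀)) * 𝒞 * D +
                ((𝒞 ^ (m - 1) * 𝒞) * D₀ ^ m) * D := by ring
          _ = (m : ℝ≥0∞) * (𝒞 * D₀) ^ m * 𝒞 * D + (𝒞 * D₀) ^ m * D := by rw [hmq, hmp]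
          _ ≤ (m : ℝ≥0∞) * (𝒞 * D₀) ^ m * 𝒞 * D + (𝒞 * D₀) ^ m * (𝒞 * D) := by
              refine add_le_add_right (mul_le_mul_right (?_ : D ≤ 𝒞 * D) ((𝒞 * D₀) ^ m)) _
              calc D = 1 * D := (one_mul D).symm
                _ ≤ 𝒞 * D := mul_le_mul_left h1𝒞 D
          _ = ((m : ℝ≥0∞) + 1) * (𝒞 * D₀) ^ m * 𝒞 * D := by ring
          _ = ((m + 1 : ℕ) : ℝ≥0∞) * (𝒞 * D₀) ^ (m + 1 - 1) * 𝒞 * D := by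
              rw [Nat.add_sub_cancel]
              push_cast
              ring
  intro m hm
  constructor
  · rw [Stmt6Aux.decayNorm_matPow]
    exact H₀ m hm
  · rw [Stmt6Aux.decayNorm_matPow]
    exact Hs m hm
end
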